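/- arXiv:0806.1148 — 4 statements merged into one kernel-verified Lean document; each statement's English description precedes it below -/
import Mathlib

section
/- Let ℓ ≤ k, let F = F⁺ ∧ F⁻ be an (ℓ,k)-CNF formula, and let G be the k-CNFification of F. Then the number of conflicts of G satisfies e(G) ≤ 4^{k-ℓ}·|F⁺| + 2^{k-ℓ}·|F⁺|·|F⁻|. -/
open scoped Classical

abbrev Var := ℕ
abbrev Lit := Var × Bool
abbrev Clause := Finset Lit
abbrev CNF := Finset Clause

/-- A clause is valid if no variable occurs both positively and negatively. -/
def ClauseValid (C : Clause) : Prop :=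
  ∀ x : Var, ¬(((x, true) ∈ C) ∧ ((x, false) ∈ C))

/-- Assignment `α` satisfies clause `C`. -/
def SatC (α : Var → Bool) (C : Clause) : Prop := ∃ l ∈ C, α l.1 = l.2

/-- A CNF formula is satisfiable. -/
def Satisfiable (F : CNF) : Prop := ∃ α : Var → Bool, ∀ C ∈ F, SatC α C

/-- Two clauses conflict: some variable positive in one, negative in the other. -/
def Conflict (C D : Clause) : Prop :=
  ∃ x : Var, (((x, true) ∈ C) ∧ ((x, false) ∈ D)) ∨ (((x, false) ∈ C) ∧ ((x, true) ∈ D))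

/-- Number of clauses of `F` containing the literal `u`. -/
noncomputable def occ (F : CNF) (u : Lit) : ℕ := (F.filter (fun C => u ∈ C)).card

/-- Number of unordered conflicting pairs of distinct clauses. -/
noncomputable def numConflicts (F : CNF) : ℕ :=
  ((F ×ˢ F).filter (fun p => p.1 ≠ p.2 ∧ Conflict p.1 p.2)).card / 2

/-- `F` is a `k`-CNF formula. -/
def IsKCNF (k : ℕ) (F : CNF) : Prop := ∀ C ∈ F, C.card = k ∧ ClauseValid C

/-- All clauses of `Fp` have exactly `l` literals, all positive. -/
def PosClauses (l : ℕ) (Fp : CNF) : Prop :=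
  ∀ C ∈ Fp, C.card = l ∧ ∀ u ∈ C, u.2 = true

/-- All clauses of `Fn` have exactly `k` literals, all negative. -/
def NegClauses (k : ℕ) (Fn : CNF) : Prop :=
  ∀ C ∈ Fn, C.card = k ∧ ∀ u ∈ C, u.2 = false

/-- The variables occurring in `F`. -/
noncomputable def varsOf (F : CNF) : Finset Var := F.biUnion (fun C => C.image Prod.fst)

/-- All `2^|V|` clauses obtained by disjoining `C` with a full sign pattern on `V`. -/
noncomputable def expansions (C : Clause) (V : Finset Var) : Finset Clause :=
  (Finset.univ : Finset ({x // x ∈ V} → Bool)).image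
    (fun s => C ∪ V.attach.image (fun x => (x.1, s x)))

/-- The complete `k`-CNF formula over the variables `0, …, k-1`. -/
noncomputable def completeCNF (k : ℕ) : CNF := expansions ∅ (Finset.range k)

/-- `G` is a `k`-CNFification of `F`: each clause `C` of `F` is replaced by the
`2^(k - |C|)` expansions of `C` over `k - |C|` fresh variables, fresh per clause. -/
noncomputable def IsKCNFification (k : ℕ) (F G : CNF) : Prop :=
  ∃ Y : Clause → Finset Var,
    (∀ C ∈ F, Disjoint (Y C) (varsOf F)) ∧
    (∀ C ∈ F, ∀ D ∈ F, C ≠ D → Disjoint (Y C) (Y D)) ∧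
    (∀ C ∈ F, (Y C).card = k - C.card) ∧
    G = F.biUnion (fun C => expansions C (Y C))

lemma expansions_card_le (C : Clause) (V : Finset Var) :
    (expansions C V).card ≤ 2 ^ V.card := by
  classical
  calc (expansions C V).card ≤ (Finset.univ : Finset ({x // x ∈ V} → Bool)).card :=
        Finset.card_image_le
    _ = 2 ^ V.card := by simp [Finset.card_univ]

lemma lit_of_mem_expansions {C : Clause} {V : Finset Var} {E : Clause}
    (h : E ∈ expansions C V) {x : Var} {b : Bool} (hx : (x, b) ∈ E) :
    (x, b) ∈ C ∨ x ∈ V := by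
  classical
  rw [expansions, Finset.mem_image] at h
  obtain ⟨s, -, rfl⟩ := h
  rcases Finset.mem_union.mp hx with h1 | h2
  · exact Or.inl h1
  · right
    obtain ⟨y, -, hy⟩ := Finset.mem_image.mp h2
    have : y.1 = x := congrArg Prod.fst hy
    exact this ▸ y.2

lemma eq_of_mem_expansions_empty {C E : Clause} (h : E ∈ expansions C ∅) : E = C := by
  classical
  rw [expansions, Finset.mem_image] at h
  obtain ⟨s, -, rfl⟩ := h
  simp

lemma mem_varsOf {F : CNF} {C : Clause} (hC : C ∈ F) {x : Var} {b : Bool}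
    (hx : (x, b) ∈ C) : x ∈ varsOf F :=
  Finset.mem_biUnion.mpr ⟨C, hC, Finset.mem_image.mpr ⟨(x, b), hx, rfl⟩⟩


/-- The `k`-CNFification `G` of an `(ℓ,k)`-CNF formula satisfies
`e(G) ≤ 4^{k-ℓ}|F⁺| + 2^{k-ℓ}|F⁺||F⁻|`. -/
theorem stmt5 (l k : ℕ) (hlk : l ≤ k) (Fp Fn G : CNF)
    (hp : PosClauses l Fp) (hn : NegClauses k Fn)
    (hG : IsKCNFification k (Fp ∪ Fn) G) :
    numConflicts G ≤ 4 ^ (k - l) * Fp.card + 2 ^ (k - l) * Fp.card * Fn.card := by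
  classical
  obtain ⟨Y, hdisj, hpair, hcard, hGeq⟩ := hG
  set F : CNF := Fp ∪ Fn with hF
  -- expansion of a negative clause is itself
  have hneg : ∀ C ∈ Fn, ∀ E ∈ expansions C (Y C), E = C := by
    intro C hC E hE
    have hYC : Y C = ∅ := by
      have h1 := hcard C (Finset.mem_union_right _ hC)
      rw [(hn C hC).1] at h1
      simpa using Finset.card_eq_zero.mp (by omega)
    exact eq_of_mem_expansions_empty (hYC ▸ hE)
  -- key: no conflict between expansions of distinct positive clauses
  have key : ∀ C ∈ Fp, ∀ C' ∈ Fp, C ≠ C' →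
      ∀ E ∈ expansions C (Y C), ∀ E' ∈ expansions C' (Y C'),
      ∀ x : Var, (x, true) ∈ E → (x, false) ∈ E' → False := by
    intro C hC C' hC' hne E hE E' hE' x hx hx'
    have hxV' : x ∈ Y C' := by
      rcases lit_of_mem_expansions hE' hx' with h | h
      · exact absurd ((hp C' hC').2 _ h) (by simp)
      · exact h
    rcases lit_of_mem_expansions hE hx with h | h
    · have hxv : x ∈ varsOf F := mem_varsOf (Finset.mem_union_left _ hC) h
      exact Finset.disjoint_left.mp (hdisj C' (Finset.mem_union_left _ hC')) hxV' hxv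
    · exact Finset.disjoint_left.mp (hpair C (Finset.mem_union_left _ hC)
        C' (Finset.mem_union_left _ hC') hne) h hxV'
  set A : Finset (Clause × Clause) :=
    Fp.biUnion (fun C => (expansions C (Y C)) ×ˢ (expansions C (Y C))) with hA
  set U : CNF := Fp.biUnion (fun C => expansions C (Y C)) with hU
  set S : Finset (Clause × Clause) :=
    ((G ×ˢ G).filter (fun p => p.1 ≠ p.2 ∧ Conflict p.1 p.2)) with hSdef
  have hsub : S ⊆ A ∪ (U ×ˢ Fn) ∪ (Fn ×ˢ U) := by
    intro p hpS
    obtain ⟨hpG, hne, hconf⟩ := Finset.mem_filter.mp hpS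
    obtain ⟨hE, hE'⟩ := Finset.mem_product.mp hpG
    rw [hGeq] at hE hE'
    obtain ⟨C, hC, hEexp⟩ := Finset.mem_biUnion.mp hE
    obtain ⟨C', hC', hE'exp⟩ := Finset.mem_biUnion.mp hE'
    obtain ⟨x, hcase⟩ := hconf
    rcases Finset.mem_union.mp hC with hCp | hCn
    · rcases Finset.mem_union.mp hC' with hC'p | hC'n
      · -- both positive: must be the same clause
        have hCC' : C = C' := by
          by_contra hne'
          rcases hcase with ⟨h1, h2⟩ | ⟨h1, h2⟩
          · exact key C hCp C' hC'p hne' _ hEexp _ hE'exp x h1 h2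
          · exact key C' hC'p C hCp (Ne.symm hne') _ hE'exp _ hEexp x h2 h1
        refine Finset.mem_union_left _ (Finset.mem_union_left _ ?_)
        exact Finset.mem_biUnion.mpr ⟨C, hCp, Finset.mem_product.mpr ⟨hEexp, hCC' ▸ hE'exp⟩⟩
      · refine Finset.mem_union_left _ (Finset.mem_union_right _ ?_)
        refine Finset.mem_product.mpr ⟨Finset.mem_biUnion.mpr ⟨C, hCp, hEexp⟩, ?_⟩
        exact (hneg C' hC'n _ hE'exp) ▸ hC'n
    · have hEC : p.1 = C := hneg C hCn _ hEexp
      rcases Finset.mem_union.mp hC' with hC'p | hC'n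
      · refine Finset.mem_union_right _ ?_
        exact Finset.mem_product.mpr ⟨hEC ▸ hCn, Finset.mem_biUnion.mpr ⟨C', hC'p, hE'exp⟩⟩
      · exfalso
        have hE'C : p.2 = C' := hneg C' hC'n _ hE'exp
        rcases hcase with ⟨h1, -⟩ | ⟨-, h2⟩
        · exact absurd ((hn C hCn).2 _ (hEC ▸ h1)) (by simp)
        · exact absurd ((hn C' hC'n).2 _ (hE'C ▸ h2)) (by simp)
  -- cardinalities
  have hexp : ∀ C ∈ Fp, (expansions C (Y C)).card ≤ 2 ^ (k - l) := by
    intro C hC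
    have h1 := expansions_card_le C (Y C)
    rwa [hcard C (Finset.mem_union_left _ hC), (hp C hC).1] at h1
  have hAcard : A.card ≤ Fp.card * 4 ^ (k - l) := by
    calc A.card ≤ ∑ C ∈ Fp, ((expansions C (Y C)) ×ˢ (expansions C (Y C))).card :=
          Finset.card_biUnion_le
      _ ≤ ∑ _C ∈ Fp, 4 ^ (k - l) := by
          refine Finset.sum_le_sum fun C hC => ?_
          rw [Finset.card_product, show (4:ℕ) ^ (k-l) = 2 ^ (k-l) * 2 ^ (k-l) by
            rw [show (4:ℕ) = 2 * 2 from rfl, mul_pow]]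
          exact Nat.mul_le_mul (hexp C hC) (hexp C hC)
      _ = Fp.card * 4 ^ (k - l) := by rw [Finset.sum_const, smul_eq_mul]
  have hUcard : U.card ≤ Fp.card * 2 ^ (k - l) := by
    calc U.card ≤ ∑ C ∈ Fp, (expansions C (Y C)).card := Finset.card_biUnion_le
      _ ≤ ∑ _C ∈ Fp, 2 ^ (k - l) := Finset.sum_le_sum fun C hC => hexp C hC
      _ = Fp.card * 2 ^ (k - l) := by rw [Finset.sum_const, smul_eq_mul]
  have hScard : S.card ≤ Fp.card * 4 ^ (k - l) + 2 * (Fp.card * 2 ^ (k - l) * Fn.card) := by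
    calc S.card ≤ (A ∪ (U ×ˢ Fn) ∪ (Fn ×ˢ U)).card := Finset.card_le_card hsub
      _ ≤ A.card + (U ×ˢ Fn).card + (Fn ×ˢ U).card :=
          le_trans (Finset.card_union_le _ _)
            (Nat.add_le_add_right (Finset.card_union_le _ _) _)
      _ ≤ Fp.card * 4 ^ (k - l) + Fp.card * 2 ^ (k - l) * Fn.card
            + Fn.card * (Fp.card * 2 ^ (k - l)) := by
          refine Nat.add_le_add (Nat.add_le_add hAcard ?_) ?_
          · rw [Finset.card_product]; exact Nat.mul_le_mul_right _ hUcard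
          · rw [Finset.card_product]; exact Nat.mul_le_mul_left _ hUcard
      _ = Fp.card * 4 ^ (k - l) + 2 * (Fp.card * 2 ^ (k - l) * Fn.card) := by ring
  have : numConflicts G = S.card / 2 := rfl
  rw [this]
  have h2T : S.card ≤ 2 * (4 ^ (k - l) * Fp.card + 2 ^ (k - l) * Fp.card * Fn.card) := by
    refine hScard.trans ?_
    ring_nf
    nlinarith [Nat.zero_le (Fp.card * 4 ^ (k - l))]
  calc S.card / 2 ≤ 2 * (4 ^ (k - l) * Fp.card + 2 ^ (k - l) * Fp.card * Fn.card) / 2 :=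
        Nat.div_le_div_right h2T
    _ = _ := Nat.mul_div_cancel_left _ (by norm_num)
end

section
/- Let F be a CNF formula not containing the empty clause, and sample a truth assignment α by independently setting each variable x to true with probability p(x) ∈ [0,1]. If for every clause C ∈ F, the sum over clauses D ∈ F conflicting with C of Pr[α does not satisfy D] is at most 1/4, then F is satisfiable. -/
open scoped Classical

namespace Stmt11

noncomputable def wt (p : Var → ℝ) (x : Var) (b : Bool) : ℝ := if b then p x else 1 - p x

noncomputable def qq (p : Var → ℝ) (D : Clause) : ℝ :=
  ∏ u ∈ D, (if u.2 then 1 - p u.1 else p u.1)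

variable (p : Var → ℝ) (V : Finset Var)

noncomputable def ww (β : {x // x ∈ V} → Bool) : ℝ := ∏ x : {x // x ∈ V}, wt p x.1 (β x)

noncomputable def ext (β : {x // x ∈ V} → Bool) : Var → Bool :=
  fun x => if h : x ∈ V then β ⟨x, h⟩ else false

noncomputable def PP (S : Finset Clause) : ℝ :=
  ∑ β ∈ Finset.univ.filter (fun β : {x // x ∈ V} → Bool => ∀ D ∈ S, SatC (ext V β) D),
    ww p V β

noncomputable def PB (C : Clause) (S : Finset Clause) : ℝ :=
  ∑ β ∈ Finset.univ.filter
      (fun β : {x // x ∈ V} → Bool => ¬ SatC (ext V β) C ∧ ∀ D ∈ S, SatC (ext V β) D),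
    ww p V β

variable {p V}

lemma wt_nonneg (hp : ∀ x, 0 ≤ p x ∧ p x ≤ 1) (x : Var) (b : Bool) : 0 ≤ wt p x b := by
  cases b <;> simp [wt, (hp x).1, (hp x).2] <;> linarith [(hp x).1, (hp x).2]

lemma wt_sum (x : Var) : wt p x false + wt p x true = 1 := by simp [wt]

lemma qq_eq (D : Clause) : qq p D = ∏ u ∈ D, wt p u.1 (!u.2) := by
  unfold qq
  refine Finset.prod_congr rfl fun u _ => ?_
  cases u.2 <;> simp [wt]

lemma qq_nonneg (hp : ∀ x, 0 ≤ p x ∧ p x ≤ 1) (D : Clause) : 0 ≤ qq p D := by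
  rw [qq_eq]
  exact Finset.prod_nonneg fun u _ => wt_nonneg hp _ _

lemma ww_nonneg (hp : ∀ x, 0 ≤ p x ∧ p x ≤ 1) (β : {x // x ∈ V} → Bool) : 0 ≤ ww p V β :=
  Finset.prod_nonneg fun x _ => wt_nonneg hp _ _

lemma PP_nonneg (hp : ∀ x, 0 ≤ p x ∧ p x ≤ 1) (S : Finset Clause) : 0 ≤ PP p V S :=
  Finset.sum_nonneg fun β _ => ww_nonneg hp β

lemma PB_nonneg (hp : ∀ x, 0 ≤ p x ∧ p x ≤ 1) (C : Clause) (S : Finset Clause) :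
    0 ≤ PB p V C S :=
  Finset.sum_nonneg fun β _ => ww_nonneg hp β

lemma sum_prod_wt (hp : ∀ x, 0 ≤ p x ∧ p x ≤ 1) {ι : Type} [Fintype ι] [DecidableEq ι] (h : ι → Var) :
    ∑ β : ι → Bool, ∏ i, wt p (h i) (β i) = 1 := by
  rw [← Fintype.prod_sum (fun i b => wt p (h i) b)]
  rw [Finset.prod_eq_one]
  intro i _
  rw [Fintype.sum_bool, add_comm, wt_sum]

lemma ww_total (hp : ∀ x, 0 ≤ p x ∧ p x ≤ 1) : ∑ β : {x // x ∈ V} → Bool, ww p V β = 1 := by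
  unfold ww
  exact sum_prod_wt hp (fun x : {x // x ∈ V} => x.1)

noncomputable def comb (q0 : Var → Prop) (σ : {x : {x // x ∈ V} // q0 x.1} → Bool)
    (γ : {x : {x // x ∈ V} // ¬ q0 x.1} → Bool) : {x // x ∈ V} → Bool :=
  fun x => if h : q0 x.1 then σ ⟨x, h⟩ else γ ⟨x, h⟩

variable (p V)

lemma sum_split (G : ({x // x ∈ V} → Bool) → ℝ) (q0 : Var → Prop) :
    ∑ β : {x // x ∈ V} → Bool, G β
      = ∑ σ : {x : {x // x ∈ V} // q0 x.1} → Bool,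
          ∑ γ : {x : {x // x ∈ V} // ¬ q0 x.1} → Bool,
            G (comb q0 σ γ) := by
  calc ∑ β : {x // x ∈ V} → Bool, G β
      = ∑ sg : ({x : {x // x ∈ V} // q0 x.1} → Bool) × ({x : {x // x ∈ V} // ¬ q0 x.1} → Bool),
          G ((Equiv.piEquivPiSubtypeProd (fun x : {x // x ∈ V} => q0 x.1) (fun _ => Bool)).symm sg) :=
        (Equiv.sum_comp _ G).symm
    _ = _ := by rw [Fintype.sum_prod_type]; rfl

lemma ww_split (q0 : Var → Prop) (σ : {x : {x // x ∈ V} // q0 x.1} → Bool)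
    (γ : {x : {x // x ∈ V} // ¬ q0 x.1} → Bool) :
    ww p V (comb q0 σ γ)
      = (∏ x : {x : {x // x ∈ V} // q0 x.1}, wt p x.1.1 (σ x))
        * ∏ x : {x : {x // x ∈ V} // ¬ q0 x.1}, wt p x.1.1 (γ x) := by
  unfold ww comb
  rw [← Finset.prod_filter_mul_prod_filter_not Finset.univ (fun x : {x // x ∈ V} => q0 x.1)]
  congr 1
  · rw [Finset.prod_subtype (p := fun x : {x // x ∈ V} => q0 x.1)
      (Finset.univ.filter (fun x : {x // x ∈ V} => q0 x.1)) (fun x => by simp)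
      (fun x => wt p x.1 (if h : q0 x.1 then σ ⟨x, h⟩ else γ ⟨x, h⟩))]
    exact Finset.prod_congr rfl fun x _ => by
      show wt p x.1.1 (if h : q0 x.1.1 then σ ⟨x.1, h⟩ else γ ⟨x.1, h⟩) = wt p x.1.1 (σ x)
      rw [dif_pos x.2]
  · rw [Finset.prod_subtype (p := fun x : {x // x ∈ V} => ¬ q0 x.1)
      (Finset.univ.filter (fun x : {x // x ∈ V} => ¬ q0 x.1)) (fun x => by simp)
      (fun x => wt p x.1 (if h : q0 x.1 then σ ⟨x, h⟩ else γ ⟨x, h⟩))]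
    exact Finset.prod_congr rfl fun x _ => by
      show wt p x.1.1 (if h : q0 x.1.1 then σ ⟨x.1, h⟩ else γ ⟨x.1, h⟩) = wt p x.1.1 (γ x)
      rw [dif_neg x.2]

variable {p V}

lemma ext_mem (β : {x // x ∈ V} → Bool) (x : Var) (hx : x ∈ V) : ext V β x = β ⟨x, hx⟩ :=
  dif_pos hx

def q0C (C : Clause) : Var → Prop := fun x => x ∈ C.image Prod.fst

lemma q0C_of_mem {C : Clause} {u : Lit} (hu : u ∈ C) : q0C C u.1 :=
  Finset.mem_image_of_mem Prod.fst hu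

noncomputable def tauC (C : Clause) : {x : {x // x ∈ V} // q0C C x.1} → Bool :=
  fun x => decide ((x.1.1, false) ∈ C)

lemma prod_tau {C : Clause} (hCV : ∀ u ∈ C, u.1 ∈ V) (hval : ClauseValid C) :
    ∏ x : {x : {x // x ∈ V} // q0C C x.1}, wt p x.1.1 (tauC C x) = qq p C := by
  rw [qq_eq]
  symm
  refine Finset.prod_bij'
    (fun u hu => (⟨⟨u.1, hCV u hu⟩, q0C_of_mem hu⟩ : {x : {x // x ∈ V} // q0C C x.1}))
    (fun x _ => ((x.1.1, decide ((x.1.1, true) ∈ C)) : Lit)) (fun u hu => Finset.mem_univ _)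
    ?_ ?_ ?_ ?_
  · -- j maps into C
    intro x _
    obtain ⟨u, hu, hufst⟩ := Finset.mem_image.1 x.2
    obtain ⟨z, b⟩ := u
    dsimp at hufst
    subst hufst
    by_cases hb : (x.1.1, true) ∈ C
    · simp [hb]
    · cases b
      · simp only [decide_eq_false hb]
        exact hu
      · exact absurd hu hb
  · -- left inverse
    rintro ⟨z, b⟩ hu
    cases b
    · have : (z, true) ∉ C := fun ht => hval z ⟨ht, hu⟩
      simp [this]
    · simp [hu]
  · -- right inverse
    intro x _
    exact Subtype.ext (Subtype.ext rfl)
  · -- factors agree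
    rintro ⟨z, b⟩ hu
    show wt p z (!b) = wt p z (tauC C _)
    congr 1
    cases b
    · simp only [tauC]
      simp [hu]
    · have : (z, false) ∉ C := fun hf => hval z ⟨hu, hf⟩
      simp only [tauC]
      simp [this]

lemma lopsided (hp : ∀ x, 0 ≤ p x ∧ p x ≤ 1) (C : Clause) (hCV : ∀ u ∈ C, u.1 ∈ V)
    (S : Finset Clause) (hS : ∀ D ∈ S, ¬ Conflict C D) :
    PB p V C S ≤ qq p C * PP p V S := by
  by_cases hval : ClauseValid C
  · -- the valid case
    have hbad : ∀ γ, ¬ SatC (ext V (comb (q0C C) (tauC C) γ)) C := by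
      rintro γ ⟨⟨x, b⟩, hl, hv⟩
      have hx : x ∈ V := hCV _ hl
      have hA : q0C C x := q0C_of_mem hl
      rw [ext_mem _ x hx] at hv
      rw [show comb (q0C C) (tauC C) γ ⟨x, hx⟩ = tauC C ⟨⟨x, hx⟩, hA⟩ from dif_pos hA] at hv
      cases b
      · simp only [tauC, decide_eq_false_iff_not] at hv
        exact hv hl
      · simp only [tauC, decide_eq_true_eq] at hv
        exact hval x ⟨hl, hv⟩
    have huniq : ∀ σ γ, ¬ SatC (ext V (comb (q0C C) σ γ)) C → σ = tauC C := by
      intro σ γ hns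
      funext y
      obtain ⟨u, hu, hufst⟩ := Finset.mem_image.1 y.2
      obtain ⟨x, b⟩ := u
      dsimp at hufst
      subst hufst
      have hne : ext V (comb (q0C C) σ γ) y.1.1 ≠ b := fun h => hns ⟨_, hu, h⟩
      rw [ext_mem _ _ y.1.2] at hne
      rw [show comb (q0C C) σ γ ⟨y.1.1, y.1.2⟩ = σ y from dif_pos y.2] at hne
      show σ y = tauC C y
      cases b
      · have h1 : σ y = true := by
          cases h : σ y
          · exact absurd h hne
          · rfl
        simp only [tauC, h1]
        simp [hu]
      · have h1 : σ y = false := by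
          cases h : σ y
          · rfl
          · exact absurd h hne
        have h2 : (y.1.1, false) ∉ C := fun hf => hval _ ⟨hu, hf⟩
        simp only [tauC, h1]
        simp [h2]
    have hmono : ∀ σ γ D, D ∈ S → SatC (ext V (comb (q0C C) (tauC C) γ)) D →
        SatC (ext V (comb (q0C C) σ γ)) D := by
      intro σ γ D hD hsat
      obtain ⟨⟨x, b⟩, hl, hv⟩ := hsat
      refine ⟨(x, b), hl, ?_⟩
      by_cases hx : x ∈ V
      · rw [ext_mem _ x hx] at hv ⊢
        by_cases hA : q0C C x
        · rw [show comb (q0C C) (tauC C) γ ⟨x, hx⟩ = tauC C ⟨⟨x, hx⟩, hA⟩ from dif_pos hA] at hv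
          exfalso
          cases b
          · simp only [tauC, decide_eq_false_iff_not] at hv
            obtain ⟨u, hu, huf⟩ := Finset.mem_image.1 hA
            obtain ⟨x', b'⟩ := u
            dsimp at huf
            subst huf
            cases b'
            · exact hv hu
            · exact hS D hD ⟨x', Or.inl ⟨hu, hl⟩⟩
          · simp only [tauC, decide_eq_true_eq] at hv
            exact hS D hD ⟨x, Or.inr ⟨hv, hl⟩⟩
        · rw [show comb (q0C C) (tauC C) γ ⟨x, hx⟩ = γ ⟨⟨x, hx⟩, hA⟩ from dif_neg hA] at hv
          rw [show comb (q0C C) σ γ ⟨x, hx⟩ = γ ⟨⟨x, hx⟩, hA⟩ from dif_neg hA]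
          exact hv
      · unfold ext at hv ⊢
        rw [dif_neg hx] at hv ⊢
        exact hv
    -- sum computations
    have hw1nn : ∀ σ : {x : {x // x ∈ V} // q0C C x.1} → Bool,
        0 ≤ ∏ x : {x : {x // x ∈ V} // q0C C x.1}, wt p x.1.1 (σ x) :=
      fun σ => Finset.prod_nonneg fun x _ => wt_nonneg hp _ _
    have hw2nn : ∀ γ : {x : {x // x ∈ V} // ¬ q0C C x.1} → Bool,
        0 ≤ ∏ x : {x : {x // x ∈ V} // ¬ q0C C x.1}, wt p x.1.1 (γ x) :=
      fun γ => Finset.prod_nonneg fun x _ => wt_nonneg hp _ _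
    have hw1sum : ∑ σ : {x : {x // x ∈ V} // q0C C x.1} → Bool,
        ∏ x : {x : {x // x ∈ V} // q0C C x.1}, wt p x.1.1 (σ x) = 1 :=
      sum_prod_wt hp _
    have hPB : PB p V C S
        = qq p C * ∑ γ : {x : {x // x ∈ V} // ¬ q0C C x.1} → Bool,
            (if (∀ D ∈ S, SatC (ext V (comb (q0C C) (tauC C) γ)) D)
              then ∏ x : {x : {x // x ∈ V} // ¬ q0C C x.1}, wt p x.1.1 (γ x) else 0) := by
      unfold PB
      rw [Finset.sum_filter, sum_split V _ (q0C C)]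
      have hpt : ∀ σ γ,
          (if (¬ SatC (ext V (comb (q0C C) σ γ)) C ∧ ∀ D ∈ S, SatC (ext V (comb (q0C C) σ γ)) D)
            then ww p V (comb (q0C C) σ γ) else 0)
          = if σ = tauC C then
              (if (∀ D ∈ S, SatC (ext V (comb (q0C C) (tauC C) γ)) D)
                then (∏ x : {x : {x // x ∈ V} // q0C C x.1}, wt p x.1.1 (tauC C x))
                  * ∏ x : {x : {x // x ∈ V} // ¬ q0C C x.1}, wt p x.1.1 (γ x) else 0) else 0 := by
        intro σ γ
        by_cases hστ : σ = tauC C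
        · subst hστ
          rw [if_pos rfl]
          by_cases hg : ∀ D ∈ S, SatC (ext V (comb (q0C C) (tauC C) γ)) D
          · rw [if_pos ⟨hbad γ, hg⟩, if_pos hg, ww_split]
          · rw [if_neg (fun h => hg h.2), if_neg hg]
        · rw [if_neg hστ, if_neg (fun h => hστ (huniq σ γ h.1))]
      rw [Finset.sum_congr rfl (fun σ _ => Finset.sum_congr rfl (fun γ _ => hpt σ γ))]
      rw [Finset.sum_comm]
      rw [Finset.mul_sum]
      refine Finset.sum_congr rfl fun γ _ => ?_
      rw [Finset.sum_ite_eq' Finset.univ (tauC C)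
        (fun _ => (if (∀ D ∈ S, SatC (ext V (comb (q0C C) (tauC C) γ)) D)
          then (∏ x : {x : {x // x ∈ V} // q0C C x.1}, wt p x.1.1 (tauC C x))
            * ∏ x : {x : {x // x ∈ V} // ¬ q0C C x.1}, wt p x.1.1 (γ x) else 0))]
      rw [if_pos (Finset.mem_univ _), prod_tau hCV hval, mul_ite, mul_zero]
    rw [hPB]
    apply mul_le_mul_of_nonneg_left ?_ (qq_nonneg hp C)
    unfold PP
    rw [Finset.sum_filter, sum_split V _ (q0C C)]
    calc ∑ γ : {x : {x // x ∈ V} // ¬ q0C C x.1} → Bool,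
          (if (∀ D ∈ S, SatC (ext V (comb (q0C C) (tauC C) γ)) D)
            then ∏ x : {x : {x // x ∈ V} // ¬ q0C C x.1}, wt p x.1.1 (γ x) else 0)
        = ∑ σ : {x : {x // x ∈ V} // q0C C x.1} → Bool,
            (∏ x : {x : {x // x ∈ V} // q0C C x.1}, wt p x.1.1 (σ x))
            * ∑ γ : {x : {x // x ∈ V} // ¬ q0C C x.1} → Bool,
              (if (∀ D ∈ S, SatC (ext V (comb (q0C C) (tauC C) γ)) D)
                then ∏ x : {x : {x // x ∈ V} // ¬ q0C C x.1}, wt p x.1.1 (γ x) else 0) := by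
          rw [← Finset.sum_mul, hw1sum, one_mul]
      _ ≤ ∑ σ : {x : {x // x ∈ V} // q0C C x.1} → Bool,
            ∑ γ : {x : {x // x ∈ V} // ¬ q0C C x.1} → Bool,
              (if (∀ D ∈ S, SatC (ext V (comb (q0C C) σ γ)) D)
                then ww p V (comb (q0C C) σ γ) else 0) := by
          refine Finset.sum_le_sum fun σ _ => ?_
          rw [Finset.mul_sum]
          refine Finset.sum_le_sum fun γ _ => ?_
          rw [mul_ite, mul_zero]
          by_cases hg : ∀ D ∈ S, SatC (ext V (comb (q0C C) (tauC C) γ)) D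
          · rw [if_pos hg, if_pos (fun D hD => hmono σ γ D hD (hg D hD)), ww_split]
          · rw [if_neg hg]
            split
            · exact ww_nonneg hp _
            · exact le_rfl
  · -- invalid clause: always satisfied, so PB = 0
    have hsat : ∀ β : {x // x ∈ V} → Bool, SatC (ext V β) C := by
      intro β
      rw [ClauseValid] at hval
      push_neg at hval
      obtain ⟨x, hxt, hxf⟩ := hval
      cases hb : ext V β x
      · exact ⟨(x, false), hxf, hb⟩
      · exact ⟨(x, true), hxt, hb⟩
    have hPB : PB p V C S = 0 := by
      unfold PB
      rw [Finset.filter_eq_empty_iff.2 (fun β _ => fun h => h.1 (hsat β)), Finset.sum_empty]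
    rw [hPB]
    exact mul_nonneg (qq_nonneg hp C) (PP_nonneg hp S)

lemma claim1 (hp : ∀ x, 0 ≤ p x ∧ p x ≤ 1) (F : CNF)
    (hV : ∀ C ∈ F, ∀ u ∈ C, u.1 ∈ V)
    (hsum : ∀ C ∈ F, ∑ D ∈ F.filter (fun D => Conflict C D), qq p D ≤ 1 / 4) :
    ∀ n (S : Finset Clause), S.card ≤ n → S ⊆ F → ∀ C ∈ F,
      PB p V C S ≤ 2 * qq p C * PP p V S := by
  intro n
  induction n with
  | zero =>
    intro S hcard hSF C hC
    have hSe : S = ∅ := Finset.card_eq_zero.1 (Nat.le_zero.1 hcard)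
    subst hSe
    have h := lopsided hp C (hV C hC) ∅ (by simp)
    nlinarith [qq_nonneg hp C, PP_nonneg (V := V) hp (∅ : Finset Clause)]
  | succ n ih =>
    intro S hcard hSF C hC
    by_cases hS1 : ∃ D ∈ S, Conflict C D
    · set S1 := S.filter (fun D => Conflict C D) with hS1def
      set S2 := S.filter (fun D => ¬ Conflict C D) with hS2def
      have hS2S : S2 ⊆ S := Finset.filter_subset _ _
      have hS2F : S2 ⊆ F := hS2S.trans hSF
      -- PB over S is at most PB over S2
      have hPBle : PB p V C S ≤ PB p V C S2 := by
        unfold PB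
        apply Finset.sum_le_sum_of_subset_of_nonneg
        · intro β hβ
          rw [Finset.mem_filter] at hβ ⊢
          exact ⟨hβ.1, hβ.2.1, fun D hD => hβ.2.2 D (hS2S hD)⟩
        · intro β _ _
          exact ww_nonneg hp β
      have hlop : PB p V C S2 ≤ qq p C * PP p V S2 :=
        lopsided hp C (hV C hC) S2 (fun D hD => (Finset.mem_filter.1 hD).2)
      -- split PP S2
      have hkey : PP p V S2 = PP p V S
          + ∑ β ∈ Finset.univ.filter (fun β : {x // x ∈ V} → Bool =>
              (∀ D ∈ S2, SatC (ext V β) D) ∧ ¬ ∀ D ∈ S, SatC (ext V β) D), ww p V β := by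
        unfold PP
        rw [← Finset.sum_filter_add_sum_filter_not
          (Finset.univ.filter (fun β : {x // x ∈ V} → Bool => ∀ D ∈ S2, SatC (ext V β) D))
          (fun β => ∀ D ∈ S, SatC (ext V β) D)]
        congr 1
        · apply Finset.sum_congr _ (fun _ _ => rfl)
          ext β
          simp only [Finset.mem_filter, Finset.mem_univ, true_and]
          constructor
          · rintro ⟨h2, h⟩
            exact h
          · intro h
            exact ⟨fun D hD => h D (hS2S hD), h⟩
        · apply Finset.sum_congr _ (fun _ _ => rfl)
          ext β
          simp only [Finset.mem_filter, Finset.mem_univ, true_and]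
      set T := Finset.univ.filter (fun β : {x // x ∈ V} → Bool =>
          (∀ D ∈ S2, SatC (ext V β) D) ∧ ¬ ∀ D ∈ S, SatC (ext V β) D) with hTdef
      have hE : (∑ β ∈ T, ww p V β) ≤ ∑ D ∈ S1, PB p V D S2 := by
        calc ∑ β ∈ T, ww p V β
            ≤ ∑ β ∈ T, ∑ D ∈ S1, (if ¬ SatC (ext V β) D then ww p V β else 0) := by
              refine Finset.sum_le_sum fun β hβ => ?_
              rw [← Finset.sum_filter]
              have hβ' := Finset.mem_filter.1 hβ
              obtain ⟨D0, hD0S, hD0n⟩ := by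
                have := hβ'.2.2
                push_neg at this
                exact this
              have hD0c : Conflict C D0 := by
                by_contra hnc
                exact hD0n (hβ'.2.1 D0 (Finset.mem_filter.2 ⟨hD0S, hnc⟩))
              refine Finset.single_le_sum (f := fun _ => ww p V β) (a := D0)
                (fun D _ => ww_nonneg hp β) ?_
              exact Finset.mem_filter.2 ⟨Finset.mem_filter.2 ⟨hD0S, hD0c⟩, hD0n⟩
          _ = ∑ D ∈ S1, ∑ β ∈ T, (if ¬ SatC (ext V β) D then ww p V β else 0) :=
              Finset.sum_comm
          _ ≤ ∑ D ∈ S1, PB p V D S2 := by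
              refine Finset.sum_le_sum fun D _ => ?_
              rw [← Finset.sum_filter]
              unfold PB
              apply Finset.sum_le_sum_of_subset_of_nonneg
              · intro β hβ
                have h1 := Finset.mem_filter.1 hβ
                have h2 := Finset.mem_filter.1 h1.1
                exact Finset.mem_filter.2 ⟨Finset.mem_univ _, h1.2, h2.2.1⟩
              · intro β _ _
                exact ww_nonneg hp β
      -- induction hypothesis
      obtain ⟨D0, hD0S, hD0c⟩ := hS1
      have hS2lt : S2.card < S.card := by
        apply Finset.card_lt_card
        refine ⟨hS2S, fun hsub => ?_⟩
        have := Finset.mem_filter.1 (hsub hD0S)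
        exact this.2 hD0c
      have hS2n : S2.card ≤ n := by omega
      have hIH : ∀ D ∈ S1, PB p V D S2 ≤ 2 * qq p D * PP p V S2 := fun D hD =>
        ih S2 hS2n hS2F D (hSF (Finset.mem_of_mem_filter D hD))
      have hq1 : ∑ D ∈ S1, qq p D ≤ 1 / 4 := by
        refine le_trans (Finset.sum_le_sum_of_subset_of_nonneg ?_
          (fun D _ _ => qq_nonneg hp D)) (hsum C hC)
        intro D hD
        have := Finset.mem_filter.1 hD
        exact Finset.mem_filter.2 ⟨hSF this.1, this.2⟩
      have hsum2 : ∑ D ∈ S1, 2 * qq p D * PP p V S2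
          = 2 * (∑ D ∈ S1, qq p D) * PP p V S2 := by
        calc ∑ D ∈ S1, 2 * qq p D * PP p V S2
            = ∑ D ∈ S1, 2 * (qq p D * PP p V S2) := Finset.sum_congr rfl fun D _ => by ring
          _ = 2 * ∑ D ∈ S1, qq p D * PP p V S2 := (Finset.mul_sum _ _ _).symm
          _ = 2 * ((∑ D ∈ S1, qq p D) * PP p V S2) := by rw [Finset.sum_mul]
          _ = 2 * (∑ D ∈ S1, qq p D) * PP p V S2 := by ring
      have hPP2nn : (0:ℝ) ≤ PP p V S2 := PP_nonneg hp S2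
      have hPPnn : (0:ℝ) ≤ PP p V S := PP_nonneg hp S
      have h1 : PP p V S2 ≤ PP p V S + 2 * (∑ D ∈ S1, qq p D) * PP p V S2 := by
        calc PP p V S2 = PP p V S + ∑ β ∈ T, ww p V β := hkey
          _ ≤ PP p V S + ∑ D ∈ S1, PB p V D S2 := add_le_add le_rfl hE
          _ ≤ PP p V S + ∑ D ∈ S1, 2 * qq p D * PP p V S2 :=
              add_le_add le_rfl (Finset.sum_le_sum hIH)
          _ = PP p V S + 2 * (∑ D ∈ S1, qq p D) * PP p V S2 := by rw [hsum2]
      have h2 : PP p V S2 ≤ 2 * PP p V S := by nlinarith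
      calc PB p V C S ≤ qq p C * PP p V S2 := le_trans hPBle hlop
        _ ≤ 2 * qq p C * PP p V S := by nlinarith [qq_nonneg hp C]
    · push_neg at hS1
      have h := lopsided hp C (hV C hC) S hS1
      nlinarith [qq_nonneg hp C, PP_nonneg (V := V) hp S]

lemma PP_empty (hp : ∀ x, 0 ≤ p x ∧ p x ≤ 1) : PP p V (∅ : Finset Clause) = 1 := by
  unfold PP
  rw [show Finset.univ.filter (fun β : {x // x ∈ V} → Bool => ∀ D ∈ (∅ : Finset Clause),
      SatC (ext V β) D) = Finset.univ from Finset.filter_true_of_mem (by simp)]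
  exact ww_total hp

lemma claim2 (hp : ∀ x, 0 ≤ p x ∧ p x ≤ 1) (F : CNF)
    (hV : ∀ C ∈ F, ∀ u ∈ C, u.1 ∈ V)
    (hsum : ∀ C ∈ F, ∑ D ∈ F.filter (fun D => Conflict C D), qq p D ≤ 1 / 4)
    (hq : ∀ C ∈ F, qq p C ≤ 1 / 4) :
    ∀ n (S : Finset Clause), S.card ≤ n → S ⊆ F → 0 < PP p V S := by
  intro n
  induction n with
  | zero =>
    intro S hcard _
    have hSe : S = ∅ := Finset.card_eq_zero.1 (Nat.le_zero.1 hcard)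
    subst hSe
    rw [PP_empty hp]
    norm_num
  | succ n ih =>
    intro S hcard hSF
    rcases S.eq_empty_or_nonempty with rfl | ⟨D, hD⟩
    · rw [PP_empty hp]
      norm_num
    · set S' := S.erase D with hS'def
      have hS'S : S' ⊆ S := Finset.erase_subset _ _
      have hsplit : PP p V S' = PP p V S + PB p V D S' := by
        unfold PP PB
        rw [← Finset.sum_filter_add_sum_filter_not
          (Finset.univ.filter (fun β : {x // x ∈ V} → Bool => ∀ E ∈ S', SatC (ext V β) E))
          (fun β => SatC (ext V β) D)]
        congr 1
        · apply Finset.sum_congr _ (fun _ _ => rfl)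
          ext β
          simp only [Finset.mem_filter, Finset.mem_univ, true_and]
          constructor
          · rintro ⟨h', hDs⟩ E hE
            by_cases hED : E = D
            · subst hED; exact hDs
            · exact h' E (Finset.mem_erase.2 ⟨hED, hE⟩)
          · intro h
            exact ⟨fun E hE => h E (hS'S hE), h D hD⟩
        · apply Finset.sum_congr _ (fun _ _ => rfl)
          ext β
          simp only [Finset.mem_filter, Finset.mem_univ, true_and]
          tauto
      have hPB : PB p V D S' ≤ 2 * qq p D * PP p V S' :=
        claim1 hp F hV hsum S'.card S' le_rfl (hS'S.trans hSF) D (hSF hD)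
      have hq2 : qq p D ≤ 1 / 4 := hq D (hSF hD)
      have hpos : 0 < PP p V S' := by
        refine ih S' ?_ (hS'S.trans hSF)
        have h2 := Finset.card_erase_lt_of_mem hD
        rw [← hS'def] at h2
        omega
      nlinarith [qq_nonneg hp D]

lemma exists_sat {F : CNF} (h : 0 < PP p V F) : ∃ α : Var → Bool, ∀ C ∈ F, SatC α C := by
  by_contra hno
  push_neg at hno
  have hempty : Finset.univ.filter
      (fun β : {x // x ∈ V} → Bool => ∀ D ∈ F, SatC (ext V β) D) = ∅ := by
    refine Finset.filter_eq_empty_iff.2 fun β _ hall => ?_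
    obtain ⟨C, hC, hn⟩ := hno (ext V β)
    exact hn (hall C hC)
  unfold PP at h
  rw [hempty, Finset.sum_empty] at h
  exact lt_irrefl _ h

end Stmt11

/-- SAT version of the lopsided Lovász Local Lemma: if for every clause `C` the failure
probabilities of the clauses conflicting with `C` sum to at most `1/4`, then `F` is
satisfiable. Here `∏_{u ∈ D} (1 - p(u))` is the probability that `D` is unsatisfied under
the product measure in which variable `x` is true with probability `p(x)`. -/
theorem stmt11 (F : CNF) (hemp : (∅ : Clause) ∉ F)
    (p : Var → ℝ) (hp : ∀ x, p x ∈ Set.Icc (0 : ℝ) 1)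
    (hsum : ∀ C ∈ F,
      ∑ D ∈ F.filter (fun D => Conflict C D),
        ∏ u ∈ D, (if u.2 then 1 - p u.1 else p u.1) ≤ 1 / 4) :
    Satisfiable F := by
  have hp0 : ∀ x, 0 ≤ p x ∧ p x ≤ 1 := fun x => ⟨(hp x).1, (hp x).2⟩
  have hsumq : ∀ C ∈ F, ∑ D ∈ F.filter (fun D => Conflict C D), Stmt11.qq p D ≤ 1 / 4 := hsum
  set Big : CNF := F.filter (fun D => 1 / 4 < Stmt11.qq p D) with hBigdef
  -- no clause of F conflicts with a clause of Big
  have hnoconf : ∀ C ∈ F, ∀ D ∈ Big, ¬ Conflict C D := by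
    intro C hC D hD hconf
    obtain ⟨hDF, hDq⟩ := Finset.mem_filter.1 hD
    have hle : Stmt11.qq p D ≤ 1 / 4 := by
      calc Stmt11.qq p D ≤ ∑ D' ∈ F.filter (fun D' => Conflict C D'), Stmt11.qq p D' :=
            Finset.single_le_sum (fun D' _ => Stmt11.qq_nonneg hp0 D')
              (Finset.mem_filter.2 ⟨hDF, hconf⟩)
        _ ≤ 1 / 4 := hsumq C hC
    linarith
  -- the adjusted probabilities
  set p' : Var → ℝ := fun x =>
    if ∃ D ∈ Big, (x, true) ∈ D then 1
    else if ∃ D ∈ Big, (x, false) ∈ D then 0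
    else p x with hp'def
  have hp'0 : ∀ x, 0 ≤ p' x ∧ p' x ≤ 1 := by
    intro x
    dsimp only [p']
    split
    · norm_num
    · split
      · norm_num
      · exact hp0 x
  -- pointwise comparison of failure factors for literals of clauses of F
  have hfac : ∀ C ∈ F, ∀ u ∈ C,
      (if u.2 then 1 - p' u.1 else p' u.1) ≤ (if u.2 then 1 - p u.1 else p u.1) := by
    rintro C hC ⟨x, b⟩ hu
    cases b
    · -- negative literal: need p' x ≤ p x
      show p' x ≤ p x
      dsimp only [p']
      by_cases h1 : ∃ D ∈ Big, (x, true) ∈ D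
      · obtain ⟨D, hD, hxt⟩ := h1
        exact absurd ⟨x, Or.inr ⟨hu, hxt⟩⟩ (hnoconf C hC D hD)
      · rw [if_neg h1]
        by_cases h2 : ∃ D ∈ Big, (x, false) ∈ D
        · rw [if_pos h2]
          exact (hp0 x).1
        · rw [if_neg h2]
    · -- positive literal: need 1 - p' x ≤ 1 - p x
      show 1 - p' x ≤ 1 - p x
      dsimp only [p']
      by_cases h1 : ∃ D ∈ Big, (x, true) ∈ D
      · rw [if_pos h1]
        linarith [(hp0 x).2]
      · rw [if_neg h1]
        by_cases h2 : ∃ D ∈ Big, (x, false) ∈ D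
        · obtain ⟨D, hD, hxf⟩ := h2
          exact absurd ⟨x, Or.inl ⟨hu, hxf⟩⟩ (hnoconf C hC D hD)
        · rw [if_neg h2]
  have hfac0 : ∀ (u : Lit), 0 ≤ (if u.2 then 1 - p' u.1 else p' u.1) := by
    rintro ⟨x, b⟩
    cases b
    · simpa using (hp'0 x).1
    · simpa using (hp'0 x).2
  have hqle : ∀ C ∈ F, Stmt11.qq p' C ≤ Stmt11.qq p C := fun C hC =>
    Finset.prod_le_prod (fun u _ => hfac0 u) (fun u hu => hfac C hC u hu)
  have hsum' : ∀ C ∈ F, ∑ D ∈ F.filter (fun D => Conflict C D), Stmt11.qq p' D ≤ 1 / 4 := by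
    intro C hC
    refine le_trans (Finset.sum_le_sum fun D hD => hqle D (Finset.mem_of_mem_filter D hD))
      (hsumq C hC)
  have hq' : ∀ C ∈ F, Stmt11.qq p' C ≤ 1 / 4 := by
    intro C hC
    by_cases hCb : C ∈ Big
    · -- Stmt11.qq p' C = 0
      have hCne : C.Nonempty := Finset.nonempty_iff_ne_empty.2 (fun h => hemp (h ▸ hC))
      obtain ⟨u, hu⟩ := hCne
      have hz : (if u.2 then 1 - p' u.1 else p' u.1) = 0 := by
        obtain ⟨x, b⟩ := u
        cases b
        · show p' x = 0
          have h1 : ¬ ∃ D ∈ Big, (x, true) ∈ D := by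
            rintro ⟨D, hD, hxt⟩
            exact hnoconf C hC D hD ⟨x, Or.inr ⟨hu, hxt⟩⟩
          have h2 : ∃ D ∈ Big, (x, false) ∈ D := ⟨C, hCb, hu⟩
          dsimp only [p']
          rw [if_neg h1, if_pos h2]
        · show 1 - p' x = 0
          have h1 : ∃ D ∈ Big, (x, true) ∈ D := ⟨C, hCb, hu⟩
          dsimp only [p']
          rw [if_pos h1]
          ring
      have : Stmt11.qq p' C = 0 := by
        unfold Stmt11.qq
        exact Finset.prod_eq_zero hu hz
      rw [this]
      norm_num
    · have : ¬ (1 / 4 < Stmt11.qq p C) := fun h => hCb (Finset.mem_filter.2 ⟨hC, h⟩)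
      push_neg at this
      exact le_trans (hqle C hC) this
  -- apply the local lemma machinery over the variables of F
  have hV : ∀ C ∈ F, ∀ u ∈ C, u.1 ∈ varsOf F := by
    intro C hC u hu
    exact Finset.mem_biUnion.2 ⟨C, hC, Finset.mem_image_of_mem Prod.fst hu⟩
  have hpos : 0 < Stmt11.PP p' (varsOf F) F :=
    Stmt11.claim2 hp'0 F hV hsum' hq' F.card F le_rfl (le_refl _)
  obtain ⟨α, hα⟩ := Stmt11.exists_sat hpos
  exact ⟨α, hα⟩
end

section
/- For every a > 1 and b ≥ a/(a−1), there is a constant c such that for all sufficiently large k there is an unsatisfiable k-CNF formula F with occ_F(x̄) ≤ c·k²·a^k and occ_F(x) ≤ c·k²·b^k for all variables x. -/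
open scoped Classical

section Stmt13Aux

open Finset


-- choose is at most 2^n
lemma choose_le_two_pow' (n r : ℕ) (h : r ≤ n) : n.choose r ≤ 2 ^ n := by
  calc n.choose r ≤ ∑ j ∈ Finset.range (n+1), n.choose j :=
        Finset.single_le_sum (f := fun j => n.choose j) (fun _ _ => Nat.zero_le _)
          (Finset.mem_range.2 (Nat.lt_succ_of_le h))
    _ = 2 ^ n := Nat.sum_range_choose n

-- card of attach filter
lemma card_filter_attach'' {α : Type*} [DecidableEq α] (s : Finset α) (p : α → Prop)
    [DecidablePred p] :
    ((Finset.univ : Finset {x // x ∈ s}).filter (fun x => p x.1)).card = (s.filter p).card := by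
  rw [Finset.univ_eq_attach, Finset.filter_attach, Finset.card_map, Finset.card_attach]

-- ratio of binomials
lemma choose_ratio (k r m : ℕ) (hkr : k ≤ r) (hrm : r ≤ m) :
    m.choose k * (r - k) ^ k ≤ r.choose k * m ^ k := by
  have key : m.descFactorial k * (r - k) ^ k ≤ r.descFactorial k * m ^ k := by
    rw [Nat.descFactorial_eq_prod_range, Nat.descFactorial_eq_prod_range]
    have e1 : (r - k) ^ k = ∏ _i ∈ Finset.range k, (r - k) := by
      rw [Finset.prod_const, Finset.card_range]
    have e2 : m ^ k = ∏ _i ∈ Finset.range k, m := by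
      rw [Finset.prod_const, Finset.card_range]
    rw [e1, e2, ← Finset.prod_mul_distrib, ← Finset.prod_mul_distrib]
    apply Finset.prod_le_prod'
    intro i hi
    have hik : i < k := Finset.mem_range.1 hi
    -- (m - i) * (r - k) ≤ (r - i) * m
    have h1 : i ≤ r := le_trans (le_of_lt (lt_of_lt_of_le hik hkr)) (le_refl r)
    have h2 : i ≤ m := le_trans h1 hrm
    zify [h1, h2, hkr, le_trans hkr hrm]
    nlinarith [mul_nonneg (sub_nonneg.2 (by exact_mod_cast le_of_lt hik : (i:ℤ) ≤ k))
        (sub_nonneg.2 (by exact_mod_cast hrm : (r:ℤ) ≤ m)),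
      mul_nonneg (sub_nonneg.2 (by exact_mod_cast h1 : (i:ℤ) ≤ r)) (by positivity : (0:ℤ) ≤ (k:ℤ))]
  have h1 : m.descFactorial k = k.factorial * m.choose k := Nat.descFactorial_eq_factorial_mul_choose m k
  have h2 : r.descFactorial k = k.factorial * r.choose k := Nat.descFactorial_eq_factorial_mul_choose r k
  rw [h1, h2] at key
  have hf : 0 < k.factorial := Nat.factorial_pos k
  calc m.choose k * (r-k)^k = (k.factorial * m.choose k * (r-k)^k) / k.factorial := by
        rw [Nat.mul_assoc, Nat.mul_div_cancel_left _ hf]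
    _ ≤ (k.factorial * r.choose k * m ^ k) / k.factorial := Nat.div_le_div_right key
    _ = r.choose k * m ^ k := by rw [Nat.mul_assoc, Nat.mul_div_cancel_left _ hf]

-- element degree in powersetCard
lemma card_filter_mem_powersetCard (m k : ℕ) (hk : 1 ≤ k) (x : ℕ) (hx : x ∈ Finset.range m) :
    (((Finset.range m).powersetCard k).filter (fun S => x ∈ S)).card = (m-1).choose (k-1) := by
  have hbij : (((Finset.range m).powersetCard k).filter (fun S => x ∈ S)).card
      = (((Finset.range m).erase x).powersetCard (k-1)).card := by
    apply Finset.card_bij (fun S _ => S.erase x)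
    · intro S hS
      simp only [Finset.mem_filter, Finset.mem_powersetCard] at hS
      obtain ⟨⟨hsub, hcard⟩, hxS⟩ := hS
      rw [Finset.mem_powersetCard]
      constructor
      · intro y hy
        rcases Finset.mem_erase.1 hy with ⟨hne, hyS⟩
        exact Finset.mem_erase.2 ⟨hne, hsub hyS⟩
      · rw [Finset.card_erase_of_mem hxS, hcard]
    · intro S hS T hT h
      have hS' := (Finset.mem_filter.1 hS).2
      have hT' := (Finset.mem_filter.1 hT).2
      rw [← Finset.insert_erase hS', ← Finset.insert_erase hT', h]
    · intro T hT
      rw [Finset.mem_powersetCard] at hT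
      have hxT : x ∉ T := fun h => (Finset.mem_erase.1 (hT.1 h)).1 rfl
      refine ⟨insert x T, ?_, ?_⟩
      · simp only [Finset.mem_filter, Finset.mem_powersetCard]
        refine ⟨⟨?_, ?_⟩, Finset.mem_insert_self _ _⟩
        · intro y hy
          rcases Finset.mem_insert.1 hy with rfl | hy
          · exact hx
          · exact (Finset.mem_erase.1 (hT.1 hy)).2
        · rw [Finset.card_insert_of_notMem hxT, hT.2]
          omega
      · rw [Finset.erase_insert hxT]
  rw [hbij, Finset.card_powersetCard, Finset.card_erase_of_mem hx, Finset.card_range]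


lemma prob_bound (k m r cA c1 dx u N D : ℕ)
    (hk : 1 ≤ k) (hkr : k < r) (hrm : r ≤ m) (h4k : 4*k ≤ m) (hm4 : 2*m < 4^k)
    (hc1pos : 0 < c1) (hcApos : 0 < cA) (hc1A : c1 ≤ cA)
    (hid : m * dx = k * cA) (hu : u = cA / c1 + 1) (hN : N = m * u) (hD : D = 3*k*u + k)
    (hchr : m.choose r ≤ 2^m) :
    m.choose r * (cA - c1)^N + m * (N.choose D * dx^D * cA^(N-D)) < cA ^ N := by
  have hm4' : 4 ≤ m := le_trans (by omega : 4 ≤ 4*k) h4k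
  have hu1 : 1 ≤ u := by rw [hu]; exact Nat.le_add_left 1 _
  have hDN : D ≤ N := by
    have h1 : k ≤ k * u := Nat.le_mul_of_pos_right k (by omega)
    have h2 : 4*(k*u) ≤ m*u := by rw [← mul_assoc]; exact Nat.mul_le_mul_right u h4k
    rw [hD, hN]
    calc 3*k*u + k = 3*(k*u) + k := by ring
      _ ≤ 3*(k*u) + k*u := by omega
      _ = 4*(k*u) := by ring
      _ ≤ m*u := h2
  -- real versions
  have hX0 : (0:ℝ) < (cA:ℝ) := by exact_mod_cast hcApos
  have hc10 : (0:ℝ) < (c1:ℝ) := by exact_mod_cast hc1pos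
  have hdx0 : (0:ℝ) ≤ (dx:ℝ) := by positivity
  have hc1X : (c1:ℝ) ≤ (cA:ℝ) := by exact_mod_cast hc1A
  have hidR : (m:ℝ) * (dx:ℝ) = (k:ℝ) * (cA:ℝ) := by exact_mod_cast hid
  -- N * c1 ≥ m * cA
  have hNc1 : (m:ℝ) * (cA:ℝ) ≤ (N:ℝ) * (c1:ℝ) := by
    have hnat : m * cA ≤ N * c1 := by
      have h1 : c1 * (cA / c1) + cA % c1 = cA := Nat.div_add_mod _ _
      have h2 : cA % c1 < c1 := Nat.mod_lt _ hc1pos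
      have h3 : cA ≤ u * c1 := by
        rw [hu]
        calc cA = c1 * (cA / c1) + cA % c1 := h1.symm
          _ ≤ c1 * (cA / c1) + c1 := by omega
          _ = (cA / c1 + 1) * c1 := by ring
      calc m * cA ≤ m * (u * c1) := Nat.mul_le_mul_left m h3
        _ = N * c1 := by rw [hN]; ring
    exact_mod_cast hnat
  -- Term 1 bound
  have hT1 : (m.choose r : ℝ) * ((cA - c1 : ℕ) : ℝ)^N ≤ (cA:ℝ)^N * (2/5) := by
    have hcast : ((cA - c1 : ℕ) : ℝ) = (cA:ℝ) - (c1:ℝ) := Nat.cast_sub hc1A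
    rw [hcast]
    have hstep : (cA:ℝ) - c1 ≤ (cA:ℝ) * Real.exp (-((c1:ℝ)/(cA:ℝ))) := by
      have h := Real.add_one_le_exp (-((c1:ℝ)/(cA:ℝ)))
      calc (cA:ℝ) - c1 = (cA:ℝ) * (-((c1:ℝ)/(cA:ℝ)) + 1) := by field_simp; ring
        _ ≤ (cA:ℝ) * Real.exp (-((c1:ℝ)/(cA:ℝ))) := mul_le_mul_of_nonneg_left h hX0.le
    have hpow : ((cA:ℝ) - c1)^N ≤ (cA:ℝ)^N * Real.exp (-((c1:ℝ)/(cA:ℝ)))^N := by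
      rw [← mul_pow]
      exact pow_le_pow_left₀ (by linarith) hstep N
    have hexp : Real.exp (-((c1:ℝ)/(cA:ℝ)))^N ≤ Real.exp (-(m:ℝ)) := by
      rw [← Real.exp_nat_mul]
      apply Real.exp_le_exp.2
      rw [mul_neg]
      apply neg_le_neg
      have h1 : (m:ℝ) ≤ ((N:ℝ) * c1)/cA := by
        rw [le_div_iff₀ hX0]; nlinarith [hNc1]
      calc (m:ℝ) ≤ ((N:ℝ) * c1)/cA := h1
        _ = (N:ℝ) * ((c1:ℝ)/cA) := by ring
    have hch : (m.choose r : ℝ) ≤ 2^m := by exact_mod_cast hchr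
    have h25 : (2:ℝ)^m * Real.exp (-(m:ℝ)) ≤ 2/5 := by
      have he : (2:ℝ) ≤ (3/4) * Real.exp 1 := by nlinarith [Real.exp_one_gt_d9]
      have h1 : (2:ℝ)^m ≤ ((3/4) * Real.exp 1)^m := pow_le_pow_left₀ (by norm_num) he m
      have h2 : ((3/4) * Real.exp 1)^m = (3/4:ℝ)^m * Real.exp (m:ℝ) := by
        rw [mul_pow, Real.exp_one_pow]
      have h3 : Real.exp (m:ℝ) * Real.exp (-(m:ℝ)) = 1 := by
        rw [← Real.exp_add]; simp
      have h4 : (3/4:ℝ)^m ≤ (3/4:ℝ)^4 :=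
        pow_le_pow_of_le_one (by norm_num) (by norm_num) hm4'
      have h5 : (0:ℝ) < Real.exp (-(m:ℝ)) := Real.exp_pos _
      calc (2:ℝ)^m * Real.exp (-(m:ℝ)) ≤ (3/4:ℝ)^m * Real.exp (m:ℝ) * Real.exp (-(m:ℝ)) := by
            rw [← h2]; exact mul_le_mul_of_nonneg_right h1 h5.le
        _ = (3/4:ℝ)^m := by rw [mul_assoc, h3, mul_one]
        _ ≤ (3/4:ℝ)^4 := h4
        _ ≤ 2/5 := by norm_num
    calc (m.choose r : ℝ) * ((cA:ℝ) - c1)^N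
        ≤ 2^m * ((cA:ℝ)^N * Real.exp (-(m:ℝ))) := by
          apply mul_le_mul hch ?_ (pow_nonneg (by linarith) N) (by positivity)
          calc ((cA:ℝ) - c1)^N ≤ (cA:ℝ)^N * Real.exp (-((c1:ℝ)/(cA:ℝ)))^N := hpow
            _ ≤ (cA:ℝ)^N * Real.exp (-(m:ℝ)) :=
                mul_le_mul_of_nonneg_left hexp (by positivity)
      _ = (cA:ℝ)^N * ((2:ℝ)^m * Real.exp (-(m:ℝ))) := by ring
      _ ≤ (cA:ℝ)^N * (2/5) := mul_le_mul_of_nonneg_left h25 (by positivity)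
  -- Term 2 bound
  have hT2 : (m:ℝ) * ((N.choose D : ℝ) * (dx:ℝ)^D * (cA:ℝ)^(N-D)) < (cA:ℝ)^N * (1/2) := by
    have hbinom : (N.choose D : ℝ) * (4*(dx:ℝ))^D * (cA:ℝ)^(N-D) ≤ (4*(dx:ℝ) + cA)^N := by
      rw [add_pow]
      have hmem : D ∈ Finset.range (N+1) := Finset.mem_range.2 (Nat.lt_succ_of_le hDN)
      calc (N.choose D : ℝ) * (4*(dx:ℝ))^D * (cA:ℝ)^(N-D)
          = (4*(dx:ℝ))^D * (cA:ℝ)^(N-D) * (N.choose D : ℝ) := by ring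
        _ ≤ ∑ j ∈ Finset.range (N+1), (4*(dx:ℝ))^j * (cA:ℝ)^(N-j) * (N.choose j : ℝ) :=
            Finset.single_le_sum
              (f := fun j => (4*(dx:ℝ))^j * (cA:ℝ)^(N-j) * (N.choose j : ℝ))
              (fun j _ => by positivity) hmem
    have hexpstep : 4*(dx:ℝ) + cA ≤ (cA:ℝ) * Real.exp (4*(dx:ℝ)/cA) := by
      have h := Real.add_one_le_exp (4*(dx:ℝ)/cA)
      calc 4*(dx:ℝ) + cA = (cA:ℝ) * (4*(dx:ℝ)/cA + 1) := by field_simp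
        _ ≤ (cA:ℝ) * Real.exp (4*(dx:ℝ)/cA) := mul_le_mul_of_nonneg_left h hX0.le
    have hpow2 : (4*(dx:ℝ) + cA)^N ≤ (cA:ℝ)^N * Real.exp (4*(dx:ℝ)/cA)^N := by
      rw [← mul_pow]
      exact pow_le_pow_left₀ (by positivity) hexpstep N
    have hdxN : (dx:ℝ) * N = ((k*u:ℕ):ℝ) * cA := by
      rw [hN]
      push_cast
      calc (dx:ℝ) * (m * u) = ((m:ℝ) * dx) * u := by ring
        _ = (k:ℝ) * cA * u := by rw [hidR]
        _ = (k:ℝ) * u * cA := by ring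
    have hexp2 : Real.exp (4*(dx:ℝ)/cA)^N ≤ (64:ℝ)^(k*u) := by
      rw [← Real.exp_nat_mul]
      have heq : (N:ℝ) * (4*(dx:ℝ)/cA) = 4 * ((k*u:ℕ):ℝ) := by
        have hne : (cA:ℝ) ≠ 0 := ne_of_gt hX0
        rw [show (N:ℝ) * (4*(dx:ℝ)/cA) = 4 * ((dx:ℝ) * N) / cA from by ring, hdxN]
        field_simp
      rw [heq]
      have h4 : Real.exp (4 * ((k*u:ℕ):ℝ)) = (Real.exp 1^4)^(k*u : ℕ) := by
        rw [Real.exp_one_pow, ← Real.exp_nat_mul]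
        ring_nf
      rw [h4]
      apply pow_le_pow_left₀ (by positivity)
      calc Real.exp 1^4 ≤ (2.7182818286:ℝ)^4 :=
            pow_le_pow_left₀ (Real.exp_pos 1).le Real.exp_one_lt_d9.le 4
        _ ≤ 64 := by norm_num
    have h4D : (4:ℝ)^D = 64^(k*u) * 4^k := by
      rw [hD]
      have h3 : 3*k*u = 3*(k*u) := by ring
      rw [pow_add, h3, pow_mul]
      norm_num
    have hkey : (N.choose D : ℝ) * (dx:ℝ)^D * (cA:ℝ)^(N-D) * ((64:ℝ)^(k*u) * 4^k)
        ≤ (cA:ℝ)^N * 64^(k*u) := by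
      calc (N.choose D : ℝ) * (dx:ℝ)^D * (cA:ℝ)^(N-D) * ((64:ℝ)^(k*u) * 4^k)
          = (N.choose D : ℝ) * (4*(dx:ℝ))^D * (cA:ℝ)^(N-D) := by
            rw [mul_pow, ← h4D]; ring
        _ ≤ (4*(dx:ℝ) + cA)^N := hbinom
        _ ≤ (cA:ℝ)^N * Real.exp (4*(dx:ℝ)/cA)^N := hpow2
        _ ≤ (cA:ℝ)^N * 64^(k*u) := mul_le_mul_of_nonneg_left hexp2 (by positivity)
    have hkey2 : (N.choose D : ℝ) * (dx:ℝ)^D * (cA:ℝ)^(N-D) * 4^k ≤ (cA:ℝ)^N := by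
      have h640 : (0:ℝ) < 64^(k*u) := by positivity
      apply le_of_mul_le_mul_right ?_ h640
      calc (N.choose D : ℝ) * (dx:ℝ)^D * (cA:ℝ)^(N-D) * 4^k * (64:ℝ)^(k*u)
          = (N.choose D : ℝ) * (dx:ℝ)^D * (cA:ℝ)^(N-D) * ((64:ℝ)^(k*u) * 4^k) := by ring
        _ ≤ (cA:ℝ)^N * 64^(k*u) := hkey
    have hm42 : (m:ℝ) * 2 < 4^k := by
      rw [mul_comm]; exact_mod_cast hm4
    have h4k0 : (0:ℝ) < (4:ℝ)^k := by positivity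
    have hXN : (0:ℝ) < (cA:ℝ)^N := by positivity
    calc (m:ℝ) * ((N.choose D : ℝ) * (dx:ℝ)^D * (cA:ℝ)^(N-D))
        ≤ (m:ℝ) * ((cA:ℝ)^N / 4^k) := by
          apply mul_le_mul_of_nonneg_left ?_ (by positivity : (0:ℝ) ≤ (m:ℝ))
          rw [le_div_iff₀ h4k0]
          exact hkey2
      _ < (cA:ℝ)^N * (1/2) := by
          rw [show (m:ℝ) * ((cA:ℝ)^N / 4^k) = (cA:ℝ)^N * ((m:ℝ) / 4^k) from by ring]
          apply mul_lt_mul_of_pos_left ?_ hXN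
          rw [div_lt_iff₀ h4k0]
          linarith
  -- combine
  have hfin : ((m.choose r * (cA - c1)^N + m * (N.choose D * dx^D * cA^(N-D)) : ℕ) : ℝ)
      < ((cA ^ N : ℕ) : ℝ) := by
    push_cast
    have hXN : (0:ℝ) < (cA:ℝ)^N := by positivity
    have := add_lt_add_of_le_of_lt hT1 hT2
    push_cast at this ⊢
    linarith
  exact_mod_cast hfin

lemma turan_exists (k m r : ℕ) (hk : 1 ≤ k) (hkr : k < r) (hrm : r ≤ m)
    (h4k : 4*k ≤ m) (hm4 : 2*m < 4^k) :
    ∃ G : Finset (Finset ℕ),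
      (∀ S ∈ G, S ⊆ Finset.range m ∧ S.card = k) ∧
      (∀ R : Finset ℕ, R ⊆ Finset.range m → R.card = r → ∃ S ∈ G, S ⊆ R) ∧
      (∀ x : ℕ, (G.filter (fun S => x ∈ S)).card
          ≤ 4 * k * (m.choose k / r.choose k + 1)) := by
  classical
  set u : ℕ := m.choose k / r.choose k + 1 with hu
  set N : ℕ := m * u with hNdef
  set D : ℕ := 3*k*u + k with hDdef
  set A : Finset (Finset ℕ) := (Finset.range m).powersetCard k with hAdef
  have hcA : A.card = m.choose k := by rw [hAdef, Finset.card_powersetCard, Finset.card_range]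
  have hkm : k ≤ m := le_trans (le_of_lt hkr) hrm
  have hcApos : 0 < A.card := by rw [hcA]; exact Nat.choose_pos hkm
  have hc1pos : 0 < r.choose k := Nat.choose_pos (le_of_lt hkr)
  have hmemA : ∀ S : Finset ℕ, S ∈ A → S ⊆ Finset.range m ∧ S.card = k := by
    intro S hS
    rw [hAdef, Finset.mem_powersetCard] at hS
    exact hS
  -- the two bad-event families
  set B1 : Finset (Fin N → {S // S ∈ A}) :=
    ((Finset.range m).powersetCard r).biUnion (fun R =>
      Fintype.piFinset (fun _ : Fin N => Finset.univ.filter (fun S : {S // S ∈ A} => ¬ S.1 ⊆ R)))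
    with hB1def
  set B2 : Finset (Fin N → {S // S ∈ A}) :=
    (Finset.range m).biUnion (fun x =>
      Finset.univ.filter (fun f : Fin N → {S // S ∈ A} =>
        D ≤ (Finset.univ.filter (fun i => x ∈ (f i).1)).card)) with hB2def
  have hB1card : B1.card ≤ m.choose r * (A.card - r.choose k)^N := by
    rw [hB1def]
    refine le_trans Finset.card_biUnion_le ?_
    have hb : ∀ R ∈ (Finset.range m).powersetCard r,
        (Fintype.piFinset (fun _ : Fin N =>
          Finset.univ.filter (fun S : {S // S ∈ A} => ¬ S.1 ⊆ R))).card
          = (A.card - r.choose k)^N := by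
      intro R hR
      rw [Fintype.card_piFinset]
      have h1 : (Finset.univ.filter (fun S : {S // S ∈ A} => S.1 ⊆ R)).card = r.choose k := by
        rw [card_filter_attach'' A (fun S => S ⊆ R)]
        have heq : A.filter (fun S => S ⊆ R) = R.powersetCard k := by
          rcases Finset.mem_powersetCard.1 hR with ⟨hRsub, hRcard⟩
          ext S
          rw [Finset.mem_filter, hAdef, Finset.mem_powersetCard, Finset.mem_powersetCard]
          constructor
          · rintro ⟨⟨_, hc⟩, hs⟩; exact ⟨hs, hc⟩
          · rintro ⟨hs, hc⟩; exact ⟨⟨subset_trans hs hRsub, hc⟩, hs⟩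
        rw [heq, Finset.card_powersetCard, (Finset.mem_powersetCard.1 hR).2]
      have h2 : (Finset.univ.filter (fun S : {S // S ∈ A} => S.1 ⊆ R)).card
          + (Finset.univ.filter (fun S : {S // S ∈ A} => ¬ S.1 ⊆ R)).card = A.card := by
        have := Finset.card_filter_add_card_filter_not
          (s := (Finset.univ : Finset {S // S ∈ A})) (p := fun S => S.1 ⊆ R)
        simpa [Finset.card_univ] using this
      have h3 : (Finset.univ.filter (fun S : {S // S ∈ A} => ¬ S.1 ⊆ R)).card
          = A.card - r.choose k := by omega
      rw [Finset.prod_const]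
      rw [h3, Finset.card_univ, Fintype.card_fin]
    rw [Finset.sum_congr rfl hb, Finset.sum_const, Finset.card_powersetCard,
      Finset.card_range, smul_eq_mul]
  have hB2card : B2.card ≤ m * (N.choose D * ((m-1).choose (k-1))^D * A.card^(N-D)) := by
    rw [hB2def]
    refine le_trans Finset.card_biUnion_le ?_
    have hb : ∀ x ∈ Finset.range m,
        (Finset.univ.filter (fun f : Fin N → {S // S ∈ A} =>
          D ≤ (Finset.univ.filter (fun i => x ∈ (f i).1)).card)).card
          ≤ N.choose D * ((m-1).choose (k-1))^D * A.card^(N-D) := by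
      intro x hx
      have hsub : Finset.univ.filter (fun f : Fin N → {S // S ∈ A} =>
            D ≤ (Finset.univ.filter (fun i => x ∈ (f i).1)).card)
          ⊆ ((Finset.univ : Finset (Fin N)).powersetCard D).biUnion (fun I =>
            Fintype.piFinset (fun i => if i ∈ I
              then Finset.univ.filter (fun S : {S // S ∈ A} => x ∈ S.1)
              else Finset.univ)) := by
        intro f hf
        rcases Finset.mem_filter.1 hf with ⟨_, hD2⟩
        obtain ⟨I, hIsub, hIcard⟩ := Finset.exists_subset_card_eq hD2
        refine Finset.mem_biUnion.2 ⟨I,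
          Finset.mem_powersetCard.2 ⟨Finset.subset_univ _, hIcard⟩, ?_⟩
        rw [Fintype.mem_piFinset]
        intro i
        by_cases hi : i ∈ I
        · simp only [hi, if_true]
          exact Finset.mem_filter.2 ⟨Finset.mem_univ _, (Finset.mem_filter.1 (hIsub hi)).2⟩
        · simp only [hi, if_false]
          exact Finset.mem_univ _
      refine le_trans (Finset.card_le_card hsub) (le_trans Finset.card_biUnion_le ?_)
      have hcount : ∀ I ∈ (Finset.univ : Finset (Fin N)).powersetCard D,
          (Fintype.piFinset (fun i => if i ∈ I
            then Finset.univ.filter (fun S : {S // S ∈ A} => x ∈ S.1)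
            else Finset.univ)).card = ((m-1).choose (k-1))^D * A.card^(N-D) := by
        intro I hI
        have hIcard : I.card = D := (Finset.mem_powersetCard.1 hI).2
        rw [Fintype.card_piFinset]
        have hdx : (Finset.univ.filter (fun S : {S // S ∈ A} => x ∈ S.1)).card
            = (m-1).choose (k-1) := by
          rw [card_filter_attach'' A (fun S => x ∈ S), hAdef]
          exact card_filter_mem_powersetCard m k hk x hx
        have hcardif : ∀ i : Fin N, (if i ∈ I
            then Finset.univ.filter (fun S : {S // S ∈ A} => x ∈ S.1)
            else Finset.univ).card
            = if i ∈ I then (m-1).choose (k-1) else A.card := by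
          intro i
          by_cases hi : i ∈ I
          · simp only [hi, if_true, hdx]
          · simp only [hi, if_false, Finset.card_univ, Fintype.card_coe]
        rw [Finset.prod_congr rfl (fun i _ => hcardif i)]
        rw [← Finset.prod_filter_mul_prod_filter_not Finset.univ (· ∈ I)]
        have e1 : Finset.univ.filter (· ∈ I) = I := by
          ext i; simp
        have e2 : Finset.univ.filter (¬ · ∈ I) = Finset.univ \ I := by
          ext i; simp
        rw [e1, e2]
        have e3 : ∀ i ∈ I, (if i ∈ I then (m-1).choose (k-1) else A.card) = (m-1).choose (k-1) :=
          fun i hi => if_pos hi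
        have e4 : ∀ i ∈ Finset.univ \ I,
            (if i ∈ I then (m-1).choose (k-1) else A.card) = A.card :=
          fun i hi => if_neg (Finset.mem_sdiff.1 hi).2
        rw [Finset.prod_congr rfl e3, Finset.prod_congr rfl e4,
          Finset.prod_const, Finset.prod_const, hIcard,
          Finset.card_sdiff_of_subset (Finset.subset_univ I), Finset.card_univ, Fintype.card_fin, hIcard]
      rw [Finset.sum_congr rfl hcount, Finset.sum_const, Finset.card_powersetCard,
        Finset.card_univ, Fintype.card_fin, smul_eq_mul, ← mul_assoc]
    refine le_trans (Finset.sum_le_sum hb) ?_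
    rw [Finset.sum_const, Finset.card_range, smul_eq_mul]
  have hlt : B1.card + B2.card < A.card ^ N := by
    have hid : m * ((m-1).choose (k-1)) = k * (m.choose k) := by
      have hnat := Nat.add_one_mul_choose_eq (m-1) (k-1)
      have hm1 : (m-1) + 1 = m := by omega
      have hk1 : (k-1) + 1 = k := by omega
      simp only [Nat.succ_eq_add_one, hm1, hk1] at hnat
      rw [hnat]; ring
    have hmain := prob_bound k m r (m.choose k) (r.choose k) ((m-1).choose (k-1)) u N D
      hk hkr hrm h4k hm4 hc1pos (by rw [← hcA]; exact hcApos)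
      (Nat.choose_le_choose k hrm) (by rw [hid])
      hu hNdef hDdef (choose_le_two_pow' m r hrm)
    rw [hcA]
    calc B1.card + B2.card
        ≤ m.choose r * (m.choose k - r.choose k)^N
          + m * (N.choose D * ((m-1).choose (k-1))^D * (m.choose k)^(N-D)) := by
          rw [← hcA]; omega
      _ < (m.choose k) ^ N := hmain
  -- find a good function
  have hgood : ∃ f : Fin N → {S // S ∈ A}, f ∉ B1 ∧ f ∉ B2 := by
    by_contra h
    push_neg at h
    have hsub : (Finset.univ : Finset (Fin N → {S // S ∈ A})) ⊆ B1 ∪ B2 := by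
      intro f _
      rcases Classical.em (f ∈ B1) with h1 | h1
      · exact Finset.mem_union_left _ h1
      · exact Finset.mem_union_right _ (h f h1)
    have h1 := Finset.card_le_card hsub
    have h2 := Finset.card_union_le B1 B2
    rw [Finset.card_univ, Fintype.card_fun, Fintype.card_coe, Fintype.card_fin] at h1
    omega
  obtain ⟨f, hf1, hf2⟩ := hgood
  refine ⟨Finset.univ.image (fun i => (f i).1), ?_, ?_, ?_⟩
  · intro S hS
    rcases Finset.mem_image.1 hS with ⟨i, _, rfl⟩
    exact hmemA _ (f i).2
  · intro R hR hRcard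
    by_contra hcon
    push_neg at hcon
    apply hf1
    rw [hB1def, Finset.mem_biUnion]
    refine ⟨R, Finset.mem_powersetCard.2 ⟨hR, hRcard⟩, ?_⟩
    rw [Fintype.mem_piFinset]
    intro i
    rw [Finset.mem_filter]
    refine ⟨Finset.mem_univ _, ?_⟩
    intro hsub
    exact absurd hsub (by
      have := hcon ((f i).1) (Finset.mem_image.2 ⟨i, Finset.mem_univ _, rfl⟩)
      exact this)
  · intro x
    rcases Classical.em (x ∈ Finset.range m) with hx | hx
    · -- degree bounded by the index count
      have hdegf : (Finset.univ.filter (fun i => x ∈ (f i).1)).card < D := by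
        by_contra hD2
        push_neg at hD2
        exact hf2 (by
          rw [hB2def, Finset.mem_biUnion]
          exact ⟨x, hx, Finset.mem_filter.2 ⟨Finset.mem_univ _, hD2⟩⟩)
      have himg : (Finset.univ.image (fun i => (f i).1)).filter (fun S => x ∈ S)
          ⊆ (Finset.univ.filter (fun i => x ∈ (f i).1)).image (fun i => (f i).1) := by
        intro S hS
        rcases Finset.mem_filter.1 hS with ⟨hS1, hS2⟩
        rcases Finset.mem_image.1 hS1 with ⟨i, _, rfl⟩
        exact Finset.mem_image.2 ⟨i, Finset.mem_filter.2 ⟨Finset.mem_univ _, hS2⟩, rfl⟩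
      calc ((Finset.univ.image (fun i => (f i).1)).filter (fun S => x ∈ S)).card
          ≤ ((Finset.univ.filter (fun i => x ∈ (f i).1)).image (fun i => (f i).1)).card :=
            Finset.card_le_card himg
        _ ≤ (Finset.univ.filter (fun i => x ∈ (f i).1)).card := Finset.card_image_le
        _ ≤ D := le_of_lt hdegf
        _ ≤ 4 * k * u := by rw [hDdef]; ring_nf; nlinarith [Nat.one_le_iff_ne_zero.2 (by positivity : u ≠ 0)]
    · -- x outside: filter is empty
      have : (Finset.univ.image (fun i => (f i).1)).filter (fun S => x ∈ S) = ∅ := by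
        rw [Finset.filter_eq_empty_iff]
        intro S hS
        rcases Finset.mem_image.1 hS with ⟨i, _, rfl⟩
        exact fun hxS => hx ((hmemA _ (f i).2).1 hxS)
      rw [this]
      simp

-- growth lemma
lemma two_cube_lt (k : ℕ) (hk : 4 ≤ k) : 2 * k^3 < 4^k := by
  induction k, hk using Nat.le_induction with
  | base => norm_num
  | succ n hn ih =>
    have h1 : 2*(n+1)^3 ≤ 4*(2*n^3) := by
      have hn2 : 4*n ≤ n*n := Nat.mul_le_mul_right n hn
      have hn3 : 4*(n*n) ≤ n*(n*n) := Nat.mul_le_mul_right (n*n) hn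
      nlinarith [hn2, hn3]
    calc 2*(n+1)^3 ≤ 4*(2*n^3) := h1
      _ < 4 * 4^n := by omega
      _ = 4^(n+1) := by ring

-- signed image facts
lemma mem_signed_image (S : Finset ℕ) (c : Bool) (x : ℕ) (d : Bool) :
    ((x, d) ∈ S.image (fun y => (y, c))) ↔ (x ∈ S ∧ d = c) := by
  constructor
  · intro h
    rcases Finset.mem_image.1 h with ⟨y, hy, heq⟩
    have h1 : y = x := congrArg Prod.fst heq
    have h2 : c = d := congrArg Prod.snd heq
    exact ⟨h1 ▸ hy, h2.symm⟩
  · rintro ⟨hx, rfl⟩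
    exact Finset.mem_image.2 ⟨x, hx, rfl⟩

lemma signed_inj (c : Bool) : Function.Injective (fun y : ℕ => (y, c)) := by
  intro y z h
  exact congrArg Prod.fst h

lemma signed_card (S : Finset ℕ) (c : Bool) :
    (S.image (fun y => (y,c))).card = S.card :=
  Finset.card_image_of_injective _ (signed_inj c)

lemma occ_union_le (P Q : CNF) (u : Lit) : occ (P ∪ Q) u ≤ occ P u + occ Q u := by
  unfold occ
  rw [Finset.filter_union]
  exact Finset.card_union_le _ _

lemma occ_image_signed (G : Finset (Finset ℕ)) (c : Bool) (x : ℕ) :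
    occ (G.image (fun S => S.image (fun y => (y,c)))) (x, c)
      ≤ (G.filter (fun S => x ∈ S)).card := by
  unfold occ
  rw [Finset.filter_image]
  refine le_trans Finset.card_image_le (Finset.card_le_card ?_)
  intro S hS
  rcases Finset.mem_filter.1 hS with ⟨h1, h2⟩
  exact Finset.mem_filter.2 ⟨h1, ((mem_signed_image S c x c).1 h2).1⟩

lemma occ_image_signed_opp (G : Finset (Finset ℕ)) (c d : Bool) (x : ℕ) (hdc : d ≠ c) :
    occ (G.image (fun S => S.image (fun y => (y,c)))) (x, d) = 0 := by
  unfold occ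
  rw [Finset.card_eq_zero, Finset.filter_eq_empty_iff]
  intro C hC
  rcases Finset.mem_image.1 hC with ⟨S, _, rfl⟩
  intro hmem
  exact hdc ((mem_signed_image S c x d).1 hmem).2

-- the numeric degree bound
lemma u_bound (k m r : ℕ) (β : ℝ) (hk : 1 ≤ k) (hkr : k < r) (hrm : r ≤ m)
    (hβ1 : 1 ≤ β)
    (hbase : (m:ℝ) ≤ ((r:ℝ) - k) * (β * ((k:ℝ)+1)/k)) :
    ((4*k*(m.choose k / r.choose k + 1) : ℕ) : ℝ) ≤ 16 * k^2 * β^k := by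
  have hkR : (1:ℝ) ≤ (k:ℝ) := by exact_mod_cast hk
  have hk0 : (0:ℝ) < k := by linarith
  have hrk0 : (0:ℝ) < (r:ℝ) - k := by
    have : (k:ℝ) < r := by exact_mod_cast hkr
    linarith
  have hc1pos : (0:ℝ) < (r.choose k : ℝ) := by
    exact_mod_cast Nat.choose_pos (le_of_lt hkr)
  -- ratio bound
  have hratio : ((m.choose k / r.choose k : ℕ):ℝ) ≤ ((m:ℝ)/((r:ℝ)-k))^k := by
    refine le_trans Nat.cast_div_le ?_
    have hnat := choose_ratio k r m (le_of_lt hkr) hrm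
    have hcast : ((r - k : ℕ):ℝ) = (r:ℝ) - k := by
      have : k ≤ r := le_of_lt hkr
      exact Nat.cast_sub this
    have hR : (m.choose k : ℝ) * ((r:ℝ) - k)^k ≤ (r.choose k : ℝ) * (m:ℝ)^k := by
      have := hnat
      have h2 : ((m.choose k * (r-k)^k : ℕ) : ℝ) ≤ ((r.choose k * m^k : ℕ) : ℝ) := by
        exact_mod_cast this
      push_cast at h2
      rw [hcast] at h2
      exact h2
    rw [div_pow, div_le_div_iff₀ hc1pos (by positivity)]
    nlinarith [hR]
  -- base bound
  have hbase2 : (m:ℝ)/((r:ℝ)-k) ≤ β * ((k:ℝ)+1)/k := by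
    rw [div_le_iff₀ hrk0]
    calc (m:ℝ) ≤ ((r:ℝ) - k) * (β * ((k:ℝ)+1)/k) := hbase
      _ = β * ((k:ℝ)+1)/k * ((r:ℝ)-k) := by ring
  -- (1+1/k)^k ≤ 3
  have hek : (((k:ℝ)+1)/k)^k ≤ 3 := by
    have h1 : ((k:ℝ)+1)/k ≤ Real.exp (1/(k:ℝ)) := by
      have h := Real.add_one_le_exp (1/(k:ℝ))
      have : ((k:ℝ)+1)/k = 1/k + 1 := by field_simp; ring
      rw [this]
      exact h
    have h2 : (((k:ℝ)+1)/k)^k ≤ Real.exp (1/(k:ℝ))^k :=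
      pow_le_pow_left₀ (by positivity) h1 k
    have h3 : Real.exp (1/(k:ℝ))^k = Real.exp ((k:ℝ) * (1/(k:ℝ))) := by
      rw [Real.exp_nat_mul]
    have h4 : (k:ℝ) * (1/(k:ℝ)) = 1 := by field_simp
    have h5 : Real.exp 1 < 3 := lt_trans Real.exp_one_lt_d9 (by norm_num)
    calc (((k:ℝ)+1)/k)^k ≤ Real.exp (1/(k:ℝ))^k := h2
      _ = Real.exp ((k:ℝ) * (1/(k:ℝ))) := h3
      _ = Real.exp 1 := by rw [h4]
      _ ≤ 3 := h5.le
  have hβk1 : (1:ℝ) ≤ β^k := one_le_pow₀ hβ1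
  have hfin : ((m:ℝ)/((r:ℝ)-k))^k ≤ 3 * β^k := by
    calc ((m:ℝ)/((r:ℝ)-k))^k ≤ (β * ((k:ℝ)+1)/k)^k :=
          pow_le_pow_left₀ (by positivity) hbase2 k
      _ = β^k * ((((k:ℝ)+1)/k))^k := by rw [← mul_pow]; ring_nf
      _ ≤ β^k * 3 := by
          apply mul_le_mul_of_nonneg_left hek (by positivity)
      _ = 3 * β^k := by ring
  push_cast
  calc (4:ℝ) * k * (((m.choose k / r.choose k : ℕ):ℝ) + 1)
      ≤ 4 * k * (3 * β^k + 1) := by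
        apply mul_le_mul_of_nonneg_left ?_ (by positivity)
        have := le_trans hratio hfin
        linarith
    _ ≤ 4 * k * (4 * β^k) := by
        apply mul_le_mul_of_nonneg_left ?_ (by positivity)
        linarith
    _ = 16 * k * β^k := by ring
    _ ≤ 16 * k^2 * β^k := by
        have : (k:ℝ) ≤ (k:ℝ)^2 := by nlinarith
        nlinarith [pow_nonneg (by linarith : (0:ℝ) ≤ β) k]


end Stmt13Aux

/-- For every `a > 1` and `b ≥ a/(a-1)` there is a constant `c` such that for all
sufficiently large `k` there is an unsatisfiable `k`-CNF formula `F` with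
`occ_F(x̄) ≤ c k² a^k` and `occ_F(x) ≤ c k² b^k` for all variables `x`. -/
theorem stmt13 (a b : ℝ) (ha : 1 < a) (hb : b ≥ a / (a - 1)) :
    ∃ c : ℝ, ∃ k₀ : ℕ, ∀ k ≥ k₀, ∃ F : CNF, IsKCNF k F ∧ ¬ Satisfiable F ∧
      ∀ x : Var, (occ F (x, false) : ℝ) ≤ c * k ^ 2 * a ^ k ∧
                 (occ F (x, true) : ℝ) ≤ c * k ^ 2 * b ^ k := by
  refine ⟨16, 100, ?_⟩
  intro k hk
  -- basic real facts
  have ha1 : (0:ℝ) < a - 1 := by linarith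
  have ha0 : (0:ℝ) < a := by linarith
  have hb1 : 1 < b := by
    refine lt_of_lt_of_le ?_ hb
    rw [lt_div_iff₀ ha1]
    linarith
  have hb0 : (0:ℝ) < b := by linarith
  have hinv : 1/a + 1/b ≤ 1 := by
    have h1 : 1/b ≤ (a-1)/a := by
      rw [div_le_div_iff₀ hb0 ha0]
      have h2 : a / (a-1) ≤ b := hb
      rw [div_le_iff₀ ha1] at h2
      linarith
    have h3 : 1/a + (a-1)/a = 1 := by field_simp; ring
    linarith
  -- parameters
  have hk1 : 1 ≤ k := by omega
  have hkR : (1:ℝ) ≤ (k:ℝ) := by exact_mod_cast hk1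
  have hk100 : (100:ℝ) ≤ (k:ℝ) := by exact_mod_cast hk
  have hkpos : (0:ℝ) < (k:ℝ) := by linarith
  have hk1pos : (0:ℝ) < (k:ℝ)+1 := by linarith
  set m := k^3 with hm
  have hmpos : (0:ℝ) < (m:ℝ) := by
    rw [hm]; push_cast; positivity
  have hmR : ((m:ℕ):ℝ) = (k:ℝ)^3 := by rw [hm]; push_cast; ring
  set τ : ℝ := (m:ℝ)*k/(b*((k:ℝ)+1)) with hτ
  set σ : ℝ := (m:ℝ)*k/(a*((k:ℝ)+1)) with hσ
  have hτpos : 0 < τ := by rw [hτ]; positivity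
  have hσpos : 0 < σ := by rw [hσ]; positivity
  set t := k + ⌈τ⌉₊ with ht
  have hceil1 : τ ≤ (⌈τ⌉₊:ℝ) := Nat.le_ceil τ
  have hceil2 : (⌈τ⌉₊:ℝ) < τ + 1 := Nat.ceil_lt_add_one hτpos.le
  have htk : t - k = ⌈τ⌉₊ := by rw [ht]; omega
  have hkt : k < t := by
    rw [ht]
    have : 1 ≤ ⌈τ⌉₊ := by
      rw [Nat.one_le_ceil_iff]; exact hτpos
    omega
  -- feasibility
  have hsum : τ + σ ≤ (m:ℝ)*k/((k:ℝ)+1) := by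
    have he : τ + σ = ((m:ℝ)*k/((k:ℝ)+1)) * (1/b + 1/a) := by
      rw [hτ, hσ]; field_simp
    rw [he]
    have hpos : (0:ℝ) ≤ (m:ℝ)*k/((k:ℝ)+1) := by positivity
    nlinarith [hinv]
  have hfeas : 2*(k:ℝ)*((k:ℝ)+1) ≤ (m:ℝ) := by
    rw [hmR]; nlinarith
  have hfrac : (m:ℝ)*k/((k:ℝ)+1) + 2*(k:ℝ) ≤ (m:ℝ) := by
    rw [div_add' _ _ _ (ne_of_gt hk1pos), div_le_iff₀ hk1pos]
    nlinarith
  have htR : (t:ℝ) ≤ (k:ℝ) + τ + 1 := by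
    rw [ht]; push_cast; linarith
  have hmain1 : (t:ℝ) + k + σ ≤ (m:ℝ) + 1 := by
    have h2 : 2*(k:ℝ) + (τ + σ) ≤ (m:ℝ) := by linarith
    linarith
  have htm : t ≤ m := by
    have : (t:ℝ) ≤ (m:ℝ) := by linarith
    exact_mod_cast this
  set r2 := m - t + 1 with hr2
  have hr2R : ((r2:ℕ):ℝ) = (m:ℝ) - t + 1 := by
    rw [hr2]; push_cast [Nat.cast_sub htm]; ring
  have hr2k : (k:ℝ) + σ ≤ (r2:ℝ) := by rw [hr2R]; linarith
  have hkr2 : k < r2 := by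
    have : (k:ℝ) < (r2:ℝ) := by linarith
    exact_mod_cast this
  have hr2m : r2 ≤ m := by
    rw [hr2]; omega
  have h4k : 4*k ≤ m := by
    have h1 : 4 ≤ k*k := by
      have h2 : 2 ≤ k := by omega
      calc 4 = 2*2 := rfl
        _ ≤ k*k := Nat.mul_le_mul h2 h2
    calc 4*k ≤ (k*k)*k := Nat.mul_le_mul_right k h1
      _ = k^3 := by ring
  have hm4 : 2*m < 4^k := by
    rw [hm]; exact two_cube_lt k (by omega)
  -- Turán systems
  obtain ⟨Gp, hGp1, hGp2, hGp3⟩ := turan_exists k m t hk1 hkt htm h4k hm4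
  obtain ⟨Gn, hGn1, hGn2, hGn3⟩ := turan_exists k m r2 hk1 hkr2 hr2m h4k hm4
  -- base bounds for u_bound
  have hbase_pos : (m:ℝ) ≤ ((t:ℝ) - k) * (b * ((k:ℝ)+1)/k) := by
    have h1 : τ ≤ (t:ℝ) - k := by
      have : ((t - k : ℕ):ℝ) = (t:ℝ) - k := by
        exact_mod_cast Nat.cast_sub (le_of_lt hkt)
      rw [← this, htk]
      exact hceil1
    have h2 : τ * (b * ((k:ℝ)+1)/k) = (m:ℝ) := by
      rw [hτ]; field_simp
    calc (m:ℝ) = τ * (b * ((k:ℝ)+1)/k) := h2.symm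
      _ ≤ ((t:ℝ) - k) * (b * ((k:ℝ)+1)/k) := by
          apply mul_le_mul_of_nonneg_right h1 (by positivity)
  have hbase_neg : (m:ℝ) ≤ ((r2:ℝ) - k) * (a * ((k:ℝ)+1)/k) := by
    have h1 : σ ≤ (r2:ℝ) - k := by linarith
    have h2 : σ * (a * ((k:ℝ)+1)/k) = (m:ℝ) := by
      rw [hσ]; field_simp
    calc (m:ℝ) = σ * (a * ((k:ℝ)+1)/k) := h2.symm
      _ ≤ ((r2:ℝ) - k) * (a * ((k:ℝ)+1)/k) := by
          apply mul_le_mul_of_nonneg_right h1 (by positivity)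
  have hub_pos := u_bound k m t b hk1 hkt htm (le_of_lt hb1) hbase_pos
  have hub_neg := u_bound k m r2 a hk1 hkr2 hr2m (le_of_lt ha) hbase_neg
  -- the formula
  set Pf : CNF := Gp.image (fun S => S.image (fun y => (y, true))) with hPf
  set Nf : CNF := Gn.image (fun S => S.image (fun y => (y, false))) with hNf
  refine ⟨Pf ∪ Nf, ?_, ?_, ?_⟩
  · -- IsKCNF
    intro C hC
    rcases Finset.mem_union.1 hC with hC | hC
    · rcases Finset.mem_image.1 hC with ⟨S, hS, rfl⟩
      refine ⟨by rw [signed_card]; exact (hGp1 S hS).2, ?_⟩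
      intro x ⟨h1, h2⟩
      have := ((mem_signed_image S true x false).1 h2).2
      simp at this
    · rcases Finset.mem_image.1 hC with ⟨S, hS, rfl⟩
      refine ⟨by rw [signed_card]; exact (hGn1 S hS).2, ?_⟩
      intro x ⟨h1, h2⟩
      have := ((mem_signed_image S false x true).1 h1).2
      simp at this
  · -- unsatisfiable
    rintro ⟨α, hα⟩
    set U := (Finset.range m).filter (fun x => α x = false) with hU
    by_cases hUc : t ≤ U.card
    · obtain ⟨R, hRU, hRcard⟩ := Finset.exists_subset_card_eq hUc
      have hRsub : R ⊆ Finset.range m :=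
        subset_trans hRU (Finset.filter_subset _ _)
      obtain ⟨S, hS, hSR⟩ := hGp2 R hRsub hRcard
      have hC : S.image (fun y => (y,true)) ∈ Pf ∪ Nf :=
        Finset.mem_union_left _ (Finset.mem_image_of_mem _ hS)
      obtain ⟨l, hl, hsat⟩ := hα _ hC
      rcases Finset.mem_image.1 hl with ⟨y, hy, rfl⟩
      have hyU : y ∈ U := hRU (hSR hy)
      have : α y = false := (Finset.mem_filter.1 hyU).2
      rw [this] at hsat
      simp at hsat
    · set W := (Finset.range m).filter (fun x => α x = true) with hW
      have hUW : U.card + W.card = m := by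
        have h1 := Finset.card_filter_add_card_filter_not
          (s := Finset.range m) (p := fun x => α x = false)
        have h2 : (Finset.range m).filter (fun x => ¬ (α x = false))
            = (Finset.range m).filter (fun x => α x = true) := by
          apply Finset.filter_congr
          intro x _
          simp
        rw [h2, Finset.card_range] at h1
        rw [hU, hW]
        exact h1
      have hWc : r2 ≤ W.card := by omega
      obtain ⟨R, hRW, hRcard⟩ := Finset.exists_subset_card_eq hWc
      have hRsub : R ⊆ Finset.range m :=
        subset_trans hRW (Finset.filter_subset _ _)
      obtain ⟨S, hS, hSR⟩ := hGn2 R hRsub hRcard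
      have hC : S.image (fun y => (y,false)) ∈ Pf ∪ Nf :=
        Finset.mem_union_right _ (Finset.mem_image_of_mem _ hS)
      obtain ⟨l, hl, hsat⟩ := hα _ hC
      rcases Finset.mem_image.1 hl with ⟨y, hy, rfl⟩
      have hyW : y ∈ W := hRW (hSR hy)
      have : α y = true := (Finset.mem_filter.1 hyW).2
      rw [this] at hsat
      simp at hsat
  · -- occurrence bounds
    intro x
    constructor
    · -- negative occurrences
      have h1 : occ (Pf ∪ Nf) (x, false) ≤ occ Pf (x,false) + occ Nf (x,false) :=
        occ_union_le _ _ _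
      have h2 : occ Pf (x,false) = 0 := occ_image_signed_opp Gp true false x (by simp)
      have h3 : occ Nf (x,false) ≤ (Gn.filter (fun S => x ∈ S)).card :=
        occ_image_signed Gn false x
      have h4 : (Gn.filter (fun S => x ∈ S)).card
          ≤ 4 * k * (m.choose k / r2.choose k + 1) := hGn3 x
      have h5 : occ (Pf ∪ Nf) (x, false) ≤ 4 * k * (m.choose k / r2.choose k + 1) := by
        omega
      calc (occ (Pf ∪ Nf) (x, false) : ℝ)
          ≤ ((4 * k * (m.choose k / r2.choose k + 1) : ℕ) : ℝ) := by exact_mod_cast h5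
        _ ≤ 16 * (k:ℝ)^2 * a^k := hub_neg
    · have h1 : occ (Pf ∪ Nf) (x, true) ≤ occ Pf (x,true) + occ Nf (x,true) :=
        occ_union_le _ _ _
      have h2 : occ Nf (x,true) = 0 := occ_image_signed_opp Gn false true x (by simp)
      have h3 : occ Pf (x,true) ≤ (Gp.filter (fun S => x ∈ S)).card :=
        occ_image_signed Gp true x
      have h4 : (Gp.filter (fun S => x ∈ S)).card
          ≤ 4 * k * (m.choose k / t.choose k + 1) := hGp3 x
      have h5 : occ (Pf ∪ Nf) (x, true) ≤ 4 * k * (m.choose k / t.choose k + 1) := by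
        omega
      calc (occ (Pf ∪ Nf) (x, true) : ℝ)
          ≤ ((4 * k * (m.choose k / t.choose k + 1) : ℕ) : ℝ) := by exact_mod_cast h5
        _ ≤ 16 * (k:ℝ)^2 * b^k := hub_pos
end

section
/- Let 1 < a < √2 and b = √(a⁴/(a²−1)). Then every k-CNF formula F with occ_F(x) ≤ b^k/(8k) and occ_F(x̄) ≤ a^k/(8k) for all variables x is satisfiable. -/
open scoped Classical

namespace S14

/-- real-valued indicator with a fixed (classical) decision procedure -/
noncomputable def ind (p : Prop) (r : ℝ) : ℝ := if p then r else 0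

lemma ind_pos {p : Prop} (h : p) (r : ℝ) : ind p r = r := if_pos h

lemma ind_neg {p : Prop} (h : ¬ p) (r : ℝ) : ind p r = 0 := if_neg h

lemma ind_nonneg {p : Prop} {r : ℝ} (h : 0 ≤ r) : 0 ≤ ind p r := by
  unfold ind; split
  · exact h
  · exact le_refl 0

lemma ind_le {p : Prop} {r : ℝ} (h : 0 ≤ r) : ind p r ≤ r := by
  unfold ind; split
  · exact le_refl r
  · exact h

lemma ind_mul (p : Prop) (c r : ℝ) : c * ind p r = ind p (c * r) := by
  unfold ind; split <;> simp

/-- weight of an assignment -/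
noncomputable def wt (τ : ℝ) (V : Finset Var) (β : {x // x ∈ V} → Bool) : ℝ :=
  ∏ x : {x // x ∈ V}, (if β x then τ else 1 - τ)

lemma wt_pos {τ : ℝ} {V : Finset Var} (h0 : 0 < τ) (h1 : τ < 1)
    (β : {x // x ∈ V} → Bool) : 0 < wt τ V β := by
  apply Finset.prod_pos
  intro x _
  by_cases h : β x <;> simp [h] <;> linarith

/-- probability of an event -/
noncomputable def PP (τ : ℝ) (V : Finset Var) (E : ({x // x ∈ V} → Bool) → Prop) : ℝ :=
  ∑ β : {x // x ∈ V} → Bool, ind (E β) (wt τ V β)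

lemma PP_nonneg {τ : ℝ} {V : Finset Var} (h0 : 0 < τ) (h1 : τ < 1)
    (E : ({x // x ∈ V} → Bool) → Prop) : 0 ≤ PP τ V E :=
  Finset.sum_nonneg (fun β _ => ind_nonneg (wt_pos h0 h1 β).le)

lemma PP_mono {τ : ℝ} {V : Finset Var} (h0 : 0 < τ) (h1 : τ < 1)
    {E₁ E₂ : ({x // x ∈ V} → Bool) → Prop} (h : ∀ β, E₁ β → E₂ β) :
    PP τ V E₁ ≤ PP τ V E₂ := by
  apply Finset.sum_le_sum
  intro β _
  by_cases h1' : E₁ β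
  · rw [ind_pos h1', ind_pos (h β h1')]
  · rw [ind_neg h1']
    exact ind_nonneg (wt_pos h0 h1 β).le

lemma PP_congr {τ : ℝ} {V : Finset Var}
    {E₁ E₂ : ({x // x ∈ V} → Bool) → Prop} (h : ∀ β, E₁ β ↔ E₂ β) :
    PP τ V E₁ = PP τ V E₂ := by
  apply Finset.sum_congr rfl
  intro β _
  by_cases h1' : E₁ β
  · rw [ind_pos h1', ind_pos ((h β).1 h1')]
  · rw [ind_neg h1', ind_neg (fun h2' => h1' ((h β).2 h2'))]

lemma PP_split {τ : ℝ} {V : Finset Var}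
    (E p : ({x // x ∈ V} → Bool) → Prop) :
    PP τ V E = PP τ V (fun β => E β ∧ p β) + PP τ V (fun β => E β ∧ ¬ p β) := by
  unfold PP
  rw [← Finset.sum_add_distrib]
  apply Finset.sum_congr rfl
  intro β _
  by_cases hE : E β
  · by_cases hp : p β
    · rw [ind_pos hE, ind_pos ⟨hE, hp⟩, ind_neg (fun h => h.2 hp)]; ring
    · rw [ind_pos hE, ind_neg (fun h => hp h.2), ind_pos ⟨hE, hp⟩]; ring
  · rw [ind_neg hE, ind_neg (fun h => hE h.1), ind_neg (fun h => hE h.1)]; ring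

end S14
namespace S14

lemma step_bound {τ : ℝ} {V : Finset Var} (h0 : 0 < τ) (h1 : τ < 1)
    (x₀ : {x // x ∈ V}) (c : Bool) (E : ({x // x ∈ V} → Bool) → Prop)
    (hE : ∀ β, E (Function.update β x₀ c) → E (Function.update β x₀ (!c))) :
    PP τ V (fun β => β x₀ = c ∧ E β) ≤ (if c then τ else 1 - τ) * PP τ V E := by
  classical
  set f : Bool → ℝ := fun b => if b then τ else 1 - τ with hf
  have hf0 : ∀ b, 0 < f b := by intro b; cases b <;> simp [hf] <;> linarith
  have hwcs : f c + f (!c) = 1 := by cases c <;> simp [hf] <;> ring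
  set inv : ({x // x ∈ V} → Bool) → ({x // x ∈ V} → Bool) :=
    fun β => Function.update β x₀ (!(β x₀)) with hinvdef
  have hinvx : ∀ β, (inv β) x₀ = !(β x₀) := by
    intro β; simp [hinvdef]
  have hinvo : ∀ (β : {x // x ∈ V} → Bool) (x : {x // x ∈ V}), x ≠ x₀ → (inv β) x = β x := by
    intro β x hx; simp only [hinvdef]; rw [Function.update_of_ne hx]
  have hinv : Function.Involutive inv := by
    intro β
    funext x
    by_cases hx : x = x₀
    · subst hx; rw [hinvx, hinvx, Bool.not_not]
    · rw [hinvo _ _ hx, hinvo _ _ hx]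
  set R : ({x // x ∈ V} → Bool) → ℝ := fun β => ∏ x ∈ Finset.univ.erase x₀, f (β x) with hR
  have hwt : ∀ β, wt τ V β = f (β x₀) * R β := by
    intro β
    exact (Finset.mul_prod_erase Finset.univ (fun x => f (β x)) (Finset.mem_univ x₀)).symm
  have hRinv : ∀ β, R (inv β) = R β := by
    intro β
    apply Finset.prod_congr rfl
    intro x hx
    rw [hinvo _ _ (Finset.mem_erase.1 hx).1]
  have hR0 : ∀ β, 0 ≤ R β := by
    intro β; exact Finset.prod_nonneg (fun x _ => (hf0 _).le)
  set A : ({x // x ∈ V} → Bool) → Prop := fun β => β x₀ = c ∧ E β with hA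
  have hS1 : PP τ V A = f c * ∑ β, ind (A β) (R β) := by
    rw [Finset.mul_sum]
    apply Finset.sum_congr rfl
    intro β _
    by_cases h : A β
    · rw [ind_pos h, ind_pos h, hwt, h.1]
    · rw [ind_neg h, ind_neg h, mul_zero]
  have hS2 : (∑ β, ind (A β) (wt τ V (inv β)))
      = f (!c) * ∑ β, ind (A β) (R β) := by
    rw [Finset.mul_sum]
    apply Finset.sum_congr rfl
    intro β _
    by_cases h : A β
    · rw [ind_pos h, ind_pos h, hwt, hRinv, hinvx, h.1]
    · rw [ind_neg h, ind_neg h, mul_zero]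
  have hreindex : (∑ β, ind (A β) (wt τ V (inv β)))
      = ∑ β, ind (A (inv β)) (wt τ V β) := by
    have h := Equiv.sum_comp (Function.Involutive.toPerm inv hinv)
      (fun γ => ind (A (inv γ)) (wt τ V γ))
    rw [← h]
    apply Finset.sum_congr rfl
    intro β _
    simp only [Function.Involutive.coe_toPerm]
    rw [hinv β]
  have hpoint : ∀ β, ind (A β) (wt τ V β) + ind (A (inv β)) (wt τ V β)
      ≤ ind (E β) (wt τ V β) := by
    intro β
    have hwpos := wt_pos (V := V) h0 h1 β
    by_cases h : A β
    · have hnot : ¬ A (inv β) := by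
        intro h'
        obtain ⟨h1', _⟩ := h'
        rw [hinvx, h.1] at h1'
        exact (Bool.not_ne_self c) h1'
      rw [ind_pos h, ind_neg hnot, ind_pos h.2, add_zero]
    · by_cases h' : A (inv β)
      · have hbx : β x₀ = !c := by
          have h1' := h'.1
          rw [hinvx] at h1'
          cases hc : β x₀ <;> cases c <;> simp_all
        have hEβ : E β := by
          have e1 : Function.update β x₀ c = inv β := by
            funext x
            by_cases hx : x = x₀
            · subst hx; rw [Function.update_self, hinvx, hbx, Bool.not_not]
            · rw [Function.update_of_ne hx, hinvo _ _ hx]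
          have e2 : Function.update β x₀ (!c) = β := by
            funext x
            by_cases hx : x = x₀
            · subst hx; rw [Function.update_self, hbx]
            · rw [Function.update_of_ne hx]
          have h3 := hE β
          rw [e1, e2] at h3
          exact h3 h'.2
        rw [ind_neg h, ind_pos h', ind_pos hEβ, zero_add]
      · rw [ind_neg h, ind_neg h', add_zero]
        exact ind_nonneg hwpos.le
  have hsum : PP τ V A + (∑ β, ind (A β) (wt τ V (inv β))) ≤ PP τ V E := by
    rw [hreindex]
    unfold PP
    rw [← Finset.sum_add_distrib]
    exact Finset.sum_le_sum (fun β _ => hpoint β)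
  have hkey : PP τ V A + (∑ β, ind (A β) (wt τ V (inv β)))
      = ∑ β, ind (A β) (R β) := by
    rw [hS1, hS2, ← add_mul, hwcs, one_mul]
  calc PP τ V (fun β => β x₀ = c ∧ E β) = f c * (∑ β, ind (A β) (R β)) := hS1
    _ ≤ f c * PP τ V E := by
        apply mul_le_mul_of_nonneg_left _ (hf0 c).le
        rw [← hkey]
        exact hsum
    _ = (if c then τ else 1 - τ) * PP τ V E := rfl

end S14
namespace S14

def SatV (V : Finset Var) (β : {x // x ∈ V} → Bool) (D : Clause) : Prop :=
  ∃ l ∈ D, ∃ h : l.1 ∈ V, β ⟨l.1, h⟩ = l.2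

def UnsatV (V : Finset Var) (β : {x // x ∈ V} → Bool) (C : Clause) : Prop :=
  ∀ l ∈ C, ∀ h : l.1 ∈ V, β ⟨l.1, h⟩ = !l.2

def ZS (V : Finset Var) (β : {x // x ∈ V} → Bool) (S : CNF) : Prop :=
  ∀ D ∈ S, SatV V β D

lemma not_satV_iff {V : Finset Var} (β : {x // x ∈ V} → Bool) (C : Clause) :
    ¬ SatV V β C ↔ UnsatV V β C := by
  unfold SatV UnsatV
  constructor
  · intro h l hl hm
    by_contra hne
    apply h
    refine ⟨l, hl, hm, ?_⟩
    cases hβ : β ⟨l.1, hm⟩ <;> cases hl2 : l.2 <;> simp_all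
  · rintro h ⟨l, hl, hm, hβ⟩
    have := h l hl hm
    rw [this] at hβ
    exact (Bool.not_ne_self l.2) hβ

/-- the unsatisfiedness weight of a clause -/
noncomputable def what (τ : ℝ) (C : Clause) : ℝ :=
  ∏ l ∈ C, (if l.2 then 1 - τ else τ)

lemma what_nonneg {τ : ℝ} (h0 : 0 < τ) (h1 : τ < 1) (C : Clause) : 0 ≤ what τ C := by
  apply Finset.prod_nonneg
  intro l _
  split <;> linarith

lemma conflict_mono {C C' D : Clause} (h : C ⊆ C') : Conflict C D → Conflict C' D := by
  rintro ⟨x, hx⟩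
  exact ⟨x, by rcases hx with ⟨h1, h2⟩ | ⟨h1, h2⟩; exacts [Or.inl ⟨h h1, h2⟩, Or.inr ⟨h h1, h2⟩]⟩

/-- The key correlation ("lopsidedness") inequality. -/
lemma coupling {τ : ℝ} {V : Finset Var} (h0 : 0 < τ) (h1 : τ < 1)
    (C : Clause) (hval : ClauseValid C) (hvars : ∀ l ∈ C, l.1 ∈ V)
    (S : CNF) (hconf : ∀ D ∈ S, ¬ Conflict C D) :
    PP τ V (fun β => UnsatV V β C ∧ ZS V β S) ≤ what τ C * PP τ V (ZS V · S) := by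
  classical
  induction C using Finset.induction_on with
  | empty =>
      rw [what, Finset.prod_empty, one_mul]
      apply PP_mono h0 h1
      intro β h
      exact h.2
  | @insert l C₀ hlC₀ ih =>
      -- variable distinctness
      have hvalC₀ : ClauseValid C₀ := by
        intro x hx
        exact hval x ⟨Finset.mem_insert_of_mem hx.1, Finset.mem_insert_of_mem hx.2⟩
      have hvarsC₀ : ∀ m ∈ C₀, m.1 ∈ V := fun m hm => hvars m (Finset.mem_insert_of_mem hm)
      have hconfC₀ : ∀ D ∈ S, ¬ Conflict C₀ D := by
        intro D hD hc
        exact hconf D hD (conflict_mono (Finset.subset_insert l _) hc)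
      have hl1V : l.1 ∈ V := hvars l (Finset.mem_insert_self l C₀)
      have hdist : ∀ m ∈ C₀, m.1 ≠ l.1 := by
        intro m hm heq
        by_cases hms : m.2 = l.2
        · apply hlC₀
          have : m = l := Prod.ext heq hms
          rwa [← this]
        · apply hval l.1
          cases hl2 : l.2
          · cases hm2 : m.2
            · rw [hl2, hm2] at hms; exact absurd rfl hms
            · constructor
              · have : m = (l.1, true) := Prod.ext heq hm2
                rw [← this]; exact Finset.mem_insert_of_mem hm
              · have : l = (l.1, false) := Prod.ext rfl hl2
                rw [← this]; exact Finset.mem_insert_self l C₀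
          · cases hm2 : m.2
            · constructor
              · have : l = (l.1, true) := Prod.ext rfl hl2
                rw [← this]; exact Finset.mem_insert_self l C₀
              · have : m = (l.1, false) := Prod.ext heq hm2
                rw [← this]; exact Finset.mem_insert_of_mem hm
            · rw [hl2, hm2] at hms; exact absurd rfl hms
      set x₀ : {x // x ∈ V} := ⟨l.1, hl1V⟩ with hx₀
      set E : ({x // x ∈ V} → Bool) → Prop := fun β => UnsatV V β C₀ ∧ ZS V β S with hEdef
      -- the flip condition
      have hflip : ∀ β, E (Function.update β x₀ (!l.2)) → E (Function.update β x₀ (!(!l.2))) := by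
        intro β hEβ
        rw [Bool.not_not]
        constructor
        · -- UnsatV C₀ is independent of coordinate x₀
          intro m hm hmV
          have hne : (⟨m.1, hmV⟩ : {x // x ∈ V}) ≠ x₀ := by
            intro heq
            exact hdist m hm (congrArg Subtype.val heq)
          rw [Function.update_of_ne hne]
          have := hEβ.1 m hm hmV
          rwa [Function.update_of_ne hne] at this
        · -- ZS S
          intro D hD
          obtain ⟨m, hm, hmV, hβm⟩ := hEβ.2 D hD
          by_cases hmx : (⟨m.1, hmV⟩ : {x // x ∈ V}) = x₀
          · -- the witness sits on x₀ : this forces a conflict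
            exfalso
            have hm1 : m.1 = l.1 := congrArg Subtype.val hmx
            rw [hmx, Function.update_self] at hβm
            -- m = (l.1, !l.2) ∈ D, l ∈ insert l C₀ : conflict
            apply hconf D hD
            refine ⟨l.1, ?_⟩
            cases hl2 : l.2
            · right
              constructor
              · have : l = (l.1, false) := Prod.ext rfl hl2
                rw [← this]; exact Finset.mem_insert_self l C₀
              · have : m = (l.1, true) := Prod.ext hm1 (by simp [← hβm, hl2])
                rw [← this]; exact hm
            · left
              constructor
              · have : l = (l.1, true) := Prod.ext rfl hl2
                rw [← this]; exact Finset.mem_insert_self l C₀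
              · have : m = (l.1, false) := Prod.ext hm1 (by simp [← hβm, hl2])
                rw [← this]; exact hm
          · refine ⟨m, hm, hmV, ?_⟩
            rw [Function.update_of_ne hmx]
            rwa [Function.update_of_ne hmx] at hβm
      have hstep := step_bound h0 h1 x₀ (!l.2) E hflip
      -- identify the events
      have hiff : ∀ β, (UnsatV V β (insert l C₀) ∧ ZS V β S) ↔ (β x₀ = !l.2 ∧ E β) := by
        intro β
        constructor
        · rintro ⟨hU, hZ⟩
          refine ⟨hU l (Finset.mem_insert_self l C₀) hl1V, ⟨?_, hZ⟩⟩
          intro m hm hmV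
          exact hU m (Finset.mem_insert_of_mem hm) hmV
        · rintro ⟨hx, ⟨hU, hZ⟩⟩
          refine ⟨?_, hZ⟩
          intro m hm hmV
          rcases Finset.mem_insert.1 hm with rfl | hm'
          · exact hx
          · exact hU m hm' hmV
      rw [PP_congr hiff]
      have hihap := ih hvalC₀ hvarsC₀ hconfC₀
      have hwins : what τ (insert l C₀) = (if l.2 then 1 - τ else τ) * what τ C₀ := by
        rw [what, Finset.prod_insert hlC₀]; rfl
      have hfactor : (if (!l.2) then τ else 1 - τ) = (if l.2 then 1 - τ else τ) := by
        cases l.2 <;> simp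
      calc PP τ V (fun β => β x₀ = !l.2 ∧ E β)
          ≤ (if (!l.2) then τ else 1 - τ) * PP τ V E := hstep
        _ = (if l.2 then 1 - τ else τ) * PP τ V (fun β => UnsatV V β C₀ ∧ ZS V β S) := by
            rw [hfactor]
        _ ≤ (if l.2 then 1 - τ else τ) * (what τ C₀ * PP τ V (ZS V · S)) := by
            apply mul_le_mul_of_nonneg_left hihap
            cases l.2 <;> simp <;> linarith
        _ = what τ (insert l C₀) * PP τ V (ZS V · S) := by
            rw [hwins]; ring

end S14
namespace S14

lemma one_sub_sum_le_prod {ι : Type*} (s : Finset ι) (f : ι → ℝ)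
    (h0 : ∀ i ∈ s, 0 ≤ f i) (h1 : ∀ i ∈ s, f i ≤ 1) :
    1 - ∑ i ∈ s, f i ≤ ∏ i ∈ s, (1 - f i) := by
  classical
  induction s using Finset.induction_on with
  | empty => simp
  | @insert a s ha ih =>
      rw [Finset.sum_insert ha, Finset.prod_insert ha]
      have h0a := h0 a (Finset.mem_insert_self a s)
      have h1a := h1 a (Finset.mem_insert_self a s)
      have ih' := ih (fun i hi => h0 i (Finset.mem_insert_of_mem hi))
        (fun i hi => h1 i (Finset.mem_insert_of_mem hi))
      have hsum : ∑ i ∈ s, f i ≤ ∑ i ∈ s, f i := le_refl _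
      nlinarith [Finset.sum_nonneg (fun i hi => h0 i (Finset.mem_insert_of_mem hi))]

lemma ZS_insert {V : Finset Var} (β : {x // x ∈ V} → Bool) (D : Clause) (S : CNF) :
    ZS V β (insert D S) ↔ SatV V β D ∧ ZS V β S := by
  unfold ZS
  constructor
  · intro h
    exact ⟨h D (Finset.mem_insert_self D S), fun D' hD' => h D' (Finset.mem_insert_of_mem hD')⟩
  · rintro ⟨h1, h2⟩ D' hD'
    rcases Finset.mem_insert.1 hD' with rfl | h
    · exact h1
    · exact h2 D' h

section LLL

variable {τ : ℝ} {V : Finset Var} {G : CNF}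

/-- main LLL induction -/
lemma claim1 (h0 : 0 < τ) (h1 : τ < 1)
    (hGvalid : ∀ D ∈ G, ClauseValid D)
    (hGvars : ∀ D ∈ G, ∀ l ∈ D, l.1 ∈ V)
    (hxle : ∀ D ∈ G, 2 * what τ D ≤ 1 / 2)
    (hfrac : ∀ C ∈ G, ∑ D ∈ G.filter (fun D => Conflict C D), (2 * what τ D) ≤ 1 / 2) :
    ∀ n (S : CNF), S ⊆ G → S.card ≤ n → ∀ C ∈ G,
      PP τ V (fun β => ¬ SatV V β C ∧ ZS V β S) ≤ (2 * what τ C) * PP τ V (ZS V · S) := by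
  classical
  intro n
  induction n using Nat.strong_induction_on with
  | _ n IH =>
    intro S hSG hScard C hCG
    set S₁ := S.filter (fun D => Conflict C D) with hS₁def
    set S₂ := S.filter (fun D => ¬ Conflict C D) with hS₂def
    have hS₂G : S₂ ⊆ G := (Finset.filter_subset _ _).trans hSG
    have hunion : S₁ ∪ S₂ = S := Finset.filter_union_filter_not_eq _ S
    -- the chain lemma
    have chain : ∀ s₁ : Finset Clause, s₁ ⊆ S₁ →
        (∏ D ∈ s₁, (1 - 2 * what τ D)) * PP τ V (ZS V · S₂)
          ≤ PP τ V (ZS V · (s₁ ∪ S₂)) := by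
      intro s₁
      induction s₁ using Finset.induction_on with
      | empty => intro _; rw [Finset.prod_empty, one_mul, Finset.empty_union]
      | @insert D s₁' hD ihs =>
          intro hsub
          have hDS₁ : D ∈ S₁ := hsub (Finset.mem_insert_self D s₁')
          have hDG : D ∈ G := hSG (Finset.mem_filter.1 hDS₁).1
          have hs₁'S₁ : s₁' ⊆ S₁ := (Finset.subset_insert D s₁').trans hsub
          set T := s₁' ∪ S₂ with hTdef
          have hDT : D ∉ T := by
            intro hDT
            rcases Finset.mem_union.1 hDT with h | h
            · exact hD h
            · have hc := (Finset.mem_filter.1 (hsub (Finset.mem_insert_self D s₁'))).2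
              exact (Finset.mem_filter.1 h).2 hc
          have hTG : T ⊆ G := Finset.union_subset (hs₁'S₁.trans ((Finset.filter_subset _ _).trans hSG)) hS₂G
          have hTS : T ⊆ S := Finset.union_subset (hs₁'S₁.trans (Finset.filter_subset _ _)) (Finset.filter_subset _ _)
          have hcardT : T.card < n := by
            have hDS : D ∈ S := (Finset.mem_filter.1 hDS₁).1
            have hinsS : insert D T ⊆ S := Finset.insert_subset hDS hTS
            have h1' : (insert D T).card ≤ S.card := Finset.card_le_card hinsS
            rw [Finset.card_insert_of_notMem hDT] at h1'
            omega
          have hueq : (insert D s₁') ∪ S₂ = insert D T := by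
            rw [hTdef, Finset.insert_union]
          rw [hueq]
          have hspl := PP_split (τ := τ) (V := V) (ZS V · T) (fun β => SatV V β D)
          have hcongr1 : PP τ V (ZS V · (insert D T))
              = PP τ V (fun β => ZS V β T ∧ SatV V β D) := by
            apply PP_congr
            intro β
            rw [ZS_insert]
            exact and_comm
          have hclaim := IH T.card hcardT T hTG (le_refl _) D hDG
          have hcongr2 : PP τ V (fun β => ZS V β T ∧ ¬ SatV V β D)
              = PP τ V (fun β => ¬ SatV V β D ∧ ZS V β T) := by
            apply PP_congr; intro β; exact and_comm
          have hPT0 : 0 ≤ PP τ V (ZS V · T) := PP_nonneg h0 h1 _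
          have hstep : (1 - 2 * what τ D) * PP τ V (ZS V · T) ≤ PP τ V (ZS V · (insert D T)) := by
            rw [hcongr1]
            have : PP τ V (fun β => ZS V β T ∧ SatV V β D)
                = PP τ V (ZS V · T) - PP τ V (fun β => ZS V β T ∧ ¬ SatV V β D) := by
              rw [hspl]; ring
            rw [this, hcongr2]
            nlinarith [hclaim]
          have hfac0 : 0 ≤ 1 - 2 * what τ D := by
            have := hxle D hDG; linarith
          have hprod0 : 0 ≤ ∏ D' ∈ s₁', (1 - 2 * what τ D') := by
            apply Finset.prod_nonneg
            intro D' hD'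
            have := hxle D' (hSG ((Finset.filter_subset _ _) (hs₁'S₁ hD')))
            linarith
          calc (∏ D' ∈ insert D s₁', (1 - 2 * what τ D')) * PP τ V (ZS V · S₂)
              = (1 - 2 * what τ D) * ((∏ D' ∈ s₁', (1 - 2 * what τ D')) * PP τ V (ZS V · S₂)) := by
                rw [Finset.prod_insert hD]; ring
            _ ≤ (1 - 2 * what τ D) * PP τ V (ZS V · T) := by
                apply mul_le_mul_of_nonneg_left (ihs hs₁'S₁) hfac0
            _ ≤ PP τ V (ZS V · (insert D T)) := hstep
    -- apply the chain to S₁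
    have hchainS : (∏ D ∈ S₁, (1 - 2 * what τ D)) * PP τ V (ZS V · S₂) ≤ PP τ V (ZS V · S) := by
      have := chain S₁ (le_refl _ : S₁ ⊆ S₁)
      rwa [hunion] at this
    have hprodhalf : (1:ℝ)/2 ≤ ∏ D ∈ S₁, (1 - 2 * what τ D) := by
      have hsub : S₁ ⊆ G.filter (fun D => Conflict C D) := by
        intro D hD
        have h' := Finset.mem_filter.1 hD
        exact Finset.mem_filter.2 ⟨hSG h'.1, h'.2⟩
      have hsumle : ∑ D ∈ S₁, (2 * what τ D) ≤ 1/2 := by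
        calc ∑ D ∈ S₁, (2 * what τ D) ≤ ∑ D ∈ G.filter (fun D => Conflict C D), (2 * what τ D) := by
              apply Finset.sum_le_sum_of_subset_of_nonneg hsub
              intro D hD _
              have := what_nonneg h0 h1 D; linarith
          _ ≤ 1/2 := hfrac C hCG
      have := one_sub_sum_le_prod S₁ (fun D => 2 * what τ D)
        (fun D hD => by have := what_nonneg h0 h1 D; linarith)
        (fun D hD => by have := hxle D (hSG ((Finset.filter_subset _ _) hD)); linarith)
      linarith
    have hZS₂ : PP τ V (ZS V · S₂) ≤ 2 * PP τ V (ZS V · S) := by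
      have h2 : (1/2 : ℝ) * PP τ V (ZS V · S₂) ≤ PP τ V (ZS V · S) := by
        calc (1/2 : ℝ) * PP τ V (ZS V · S₂)
            ≤ (∏ D ∈ S₁, (1 - 2 * what τ D)) * PP τ V (ZS V · S₂) := by
              apply mul_le_mul_of_nonneg_right hprodhalf (PP_nonneg h0 h1 _)
          _ ≤ PP τ V (ZS V · S) := hchainS
      linarith
    -- main chain
    have hmono : PP τ V (fun β => ¬ SatV V β C ∧ ZS V β S)
        ≤ PP τ V (fun β => ¬ SatV V β C ∧ ZS V β S₂) := by
      apply PP_mono h0 h1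
      rintro β ⟨hn, hZ⟩
      exact ⟨hn, fun D hD => hZ D ((Finset.filter_subset _ _) hD)⟩
    have hcoupl : PP τ V (fun β => ¬ SatV V β C ∧ ZS V β S₂)
        ≤ what τ C * PP τ V (ZS V · S₂) := by
      have hiff : ∀ β, (¬ SatV V β C ∧ ZS V β S₂) ↔ (UnsatV V β C ∧ ZS V β S₂) := by
        intro β
        rw [not_satV_iff]
      rw [PP_congr hiff]
      apply coupling h0 h1 C (hGvalid C hCG) (hGvars C hCG) S₂
      intro D hD
      exact (Finset.mem_filter.1 hD).2
    have hwnn := what_nonneg h0 h1 C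
    calc PP τ V (fun β => ¬ SatV V β C ∧ ZS V β S)
        ≤ what τ C * PP τ V (ZS V · S₂) := le_trans hmono hcoupl
      _ ≤ what τ C * (2 * PP τ V (ZS V · S)) := by
          apply mul_le_mul_of_nonneg_left hZS₂ hwnn
      _ = (2 * what τ C) * PP τ V (ZS V · S) := by ring

/-- conclusion of the local lemma: some assignment satisfies all clauses of `G` -/
lemma lll (h0 : 0 < τ) (h1 : τ < 1)
    (hGvalid : ∀ D ∈ G, ClauseValid D)
    (hGvars : ∀ D ∈ G, ∀ l ∈ D, l.1 ∈ V)
    (hxle : ∀ D ∈ G, 2 * what τ D ≤ 1 / 2)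
    (hfrac : ∀ C ∈ G, ∑ D ∈ G.filter (fun D => Conflict C D), (2 * what τ D) ≤ 1 / 2) :
    ∃ β : {x // x ∈ V} → Bool, ZS V β G := by
  classical
  have hchain : ∀ s : Finset Clause, s ⊆ G →
      (∏ D ∈ s, (1 - 2 * what τ D)) * PP τ V (fun _ => True) ≤ PP τ V (ZS V · s) := by
    intro s
    induction s using Finset.induction_on with
    | empty =>
        intro _
        rw [Finset.prod_empty, one_mul]
        apply le_of_eq
        apply PP_congr
        intro β
        simp [ZS]
    | @insert D s' hD ihs =>
        intro hsub
        have hDG : D ∈ G := hsub (Finset.mem_insert_self D s')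
        have hs'G : s' ⊆ G := (Finset.subset_insert D s').trans hsub
        have hcongr1 : PP τ V (ZS V · (insert D s'))
            = PP τ V (fun β => ZS V β s' ∧ SatV V β D) := by
          apply PP_congr; intro β; rw [ZS_insert]; exact and_comm
        have hspl := PP_split (τ := τ) (V := V) (ZS V · s') (fun β => SatV V β D)
        have hcongr2 : PP τ V (fun β => ZS V β s' ∧ ¬ SatV V β D)
            = PP τ V (fun β => ¬ SatV V β D ∧ ZS V β s') := by
          apply PP_congr; intro β; exact and_comm
        have hclaim := claim1 h0 h1 hGvalid hGvars hxle hfrac s'.card s' hs'G (le_refl _) D hDG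
        have hstep : (1 - 2 * what τ D) * PP τ V (ZS V · s') ≤ PP τ V (ZS V · (insert D s')) := by
          rw [hcongr1]
          have heq : PP τ V (fun β => ZS V β s' ∧ SatV V β D)
              = PP τ V (ZS V · s') - PP τ V (fun β => ZS V β s' ∧ ¬ SatV V β D) := by
            rw [hspl]; ring
          rw [heq, hcongr2]
          nlinarith [hclaim]
        have hfac0 : 0 ≤ 1 - 2 * what τ D := by
          have := hxle D hDG; linarith
        have hP0 : 0 ≤ PP τ V (fun _ : {x // x ∈ V} → Bool => True) := PP_nonneg h0 h1 _
        calc (∏ D' ∈ insert D s', (1 - 2 * what τ D')) * PP τ V (fun _ => True)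
            = (1 - 2 * what τ D) * ((∏ D' ∈ s', (1 - 2 * what τ D')) * PP τ V (fun _ => True)) := by
              rw [Finset.prod_insert hD]; ring
          _ ≤ (1 - 2 * what τ D) * PP τ V (ZS V · s') := by
              apply mul_le_mul_of_nonneg_left (ihs hs'G) hfac0
          _ ≤ PP τ V (ZS V · (insert D s')) := hstep
  have hPtrue : 0 < PP τ V (fun _ : {x // x ∈ V} → Bool => True) := by
    apply Finset.sum_pos
    · intro β _
      rw [ind_pos trivial]
      exact wt_pos h0 h1 β
    · exact Finset.univ_nonempty
  have hprodpos : 0 < ∏ D ∈ G, (1 - 2 * what τ D) := by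
    apply Finset.prod_pos
    intro D hD
    have h1' := hxle D hD
    have h2' := what_nonneg h0 h1 D
    linarith
  have hpos : 0 < PP τ V (ZS V · G) := by
    have := hchain G (le_refl _)
    nlinarith
  by_contra hne
  push_neg at hne
  have : PP τ V (ZS V · G) = 0 := by
    apply Finset.sum_eq_zero
    intro β _
    exact ind_neg (hne β) _
  rw [this] at hpos
  exact lt_irrefl 0 hpos

end LLL

end S14
namespace S14

lemma alg_shrunk {a τ : ℝ} (ha : 1 ≤ a) (hτ0 : 0 ≤ τ) (hτa : a^2 * τ = 1)
    {k nn : ℕ} (h : k ≤ 2 * nn) : a^k * τ^nn ≤ 1 := by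
  have h1 : a^k ≤ a^(2*nn) := pow_le_pow_right₀ ha h
  have h2 : a^(2*nn) * τ^nn = 1 := by
    rw [pow_mul, ← mul_pow, hτa, one_pow]
  calc a^k * τ^nn ≤ a^(2*nn) * τ^nn := by
        apply mul_le_mul_of_nonneg_right h1 (pow_nonneg hτ0 nn)
    _ = 1 := h2

lemma alg_kept {c τ σ : ℝ} (h1 : 0 ≤ c^2 * (τ * σ)) (h2 : c^2 * (τ * σ) ≤ 1)
    (h3 : 0 ≤ c * σ) (h4 : c * σ ≤ 1)
    {k nn np : ℕ} (hk : nn + np = k) (hnn : 2 * nn ≤ k) :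
    c^k * (τ^nn * σ^np) ≤ 1 := by
  set r := k - 2*nn with hrdef
  have hr : np = nn + r := by omega
  have hkeq : k = 2*nn + r := by omega
  have heq : c^k * (τ^nn * σ^np) = (c^2*(τ*σ))^nn * (c*σ)^r := by
    rw [hkeq, hr]
    ring
  rw [heq]
  calc (c^2*(τ*σ))^nn * (c*σ)^r ≤ 1 * 1 := by
        apply mul_le_mul (pow_le_one₀ h1 h2) (pow_le_one₀ h3 h4) (pow_nonneg h3 r) zero_le_one
    _ = 1 := by ring

lemma what_eq (τ : ℝ) (D : Clause) :
    what τ D = τ ^ ((D.filter (fun l => l.2 = false)).card)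
      * (1-τ) ^ ((D.filter (fun l => ¬ l.2 = false)).card) := by
  classical
  have h1 : ∏ l ∈ D.filter (fun l => l.2 = false), (if l.2 then 1-τ else τ)
      = τ ^ (D.filter (fun l => l.2 = false)).card := by
    rw [Finset.prod_congr rfl (g := fun _ => τ) ?_, Finset.prod_const]
    intro l hl
    rw [(Finset.mem_filter.1 hl).2]
    simp
  have h2 : ∏ l ∈ D.filter (fun l => ¬ l.2 = false), (if l.2 then 1-τ else τ)
      = (1-τ) ^ (D.filter (fun l => ¬ l.2 = false)).card := by
    rw [Finset.prod_congr rfl (g := fun _ => (1-τ)) ?_, Finset.prod_const]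
    intro l hl
    have hl2 := (Finset.mem_filter.1 hl).2
    have : l.2 = true := by
      cases h : l.2
      · exact absurd h hl2
      · rfl
    rw [this]
    simp
  rw [what, ← Finset.prod_filter_mul_prod_filter_not D (fun l => l.2 = false), h1, h2]

lemma sum_biUnion_le' {ι κ : Type*} [DecidableEq ι] [DecidableEq κ] (s : Finset ι) (t : ι → Finset κ) (f : κ → ℝ)
    (hf : ∀ x, 0 ≤ f x) : ∑ x ∈ s.biUnion t, f x ≤ ∑ i ∈ s, ∑ x ∈ t i, f x := by
  induction s using Finset.induction_on with
  | empty => simp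
  | @insert a s ha ih =>
      rw [Finset.biUnion_insert, Finset.sum_insert ha]
      have h2 : 0 ≤ ∑ x ∈ t a ∩ s.biUnion t, f x := Finset.sum_nonneg fun x _ => hf x
      have h3 := Finset.sum_union_inter (s₁ := t a) (s₂ := s.biUnion t) (f := f)
      linarith

lemma valid_subset {C C' : Clause} (h : C' ⊆ C) (hv : ClauseValid C) : ClauseValid C' :=
  fun x hx => hv x ⟨h hx.1, h hx.2⟩

end S14
set_option maxHeartbeats 2000000 in
/-- Let `1 < a < √2` and `b = √(a⁴/(a²-1))`. Every `k`-CNF formula `F` with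
`occ_F(x) ≤ b^k/(8k)` and `occ_F(x̄) ≤ a^k/(8k)` for all `x` is satisfiable. -/
theorem stmt14 (a b : ℝ) (ha1 : 1 < a) (ha2 : a < Real.sqrt 2)
    (hb : b = Real.sqrt (a ^ 4 / (a ^ 2 - 1)))
    (k : ℕ) (hk : 1 ≤ k) (F : CNF) (hF : IsKCNF k F)
    (hocc : ∀ x : Var, (occ F (x, true) : ℝ) ≤ b ^ k / (8 * k) ∧
                       (occ F (x, false) : ℝ) ≤ a ^ k / (8 * k)) :
    Satisfiable F := by
  classical
  have hk1 : (1:ℝ) ≤ (k:ℝ) := by exact_mod_cast hk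
  have hk0 : (0:ℝ) < 8 * k := by linarith
  by_cases hcase : (8:ℝ) * (k:ℝ) ≤ a ^ k
  · -- main case
    have ha0 : (0:ℝ) < a := lt_trans one_pos ha1
    have hak0 : (0:ℝ) < a ^ k := pow_pos ha0 k
    have ha2gt : 1 < a^2 := by nlinarith
    have ha2lt : a^2 < 2 := by
      have h2 : a^2 < (Real.sqrt 2)^2 := by
        apply pow_lt_pow_left₀ ha2 ha0.le
        norm_num
      rwa [Real.sq_sqrt (by norm_num : (0:ℝ) ≤ 2)] at h2
    set τ : ℝ := (a^2)⁻¹ with hτdef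
    have hτ0 : 0 < τ := by rw [hτdef]; positivity
    have ha2τ : a^2 * τ = 1 := mul_inv_cancel₀ (by positivity)
    have hτ1 : τ < 1 := by nlinarith [mul_lt_mul_of_pos_right ha2gt hτ0]
    have hτhalf : 1/2 < τ := by nlinarith [mul_lt_mul_of_pos_left ha2lt hτ0]
    have hσ0 : 0 < 1 - τ := by linarith
    have hστ : 1 - τ ≤ τ := by linarith
    have haσ : a * (1 - τ) ≤ 1 := by nlinarith [ha2τ, ha2lt, ha1, ha0]
    have ha2m1 : 0 < a^2 - 1 := by linarith
    have hb2 : b^2 = a^4/(a^2-1) := by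
      rw [hb, Real.sq_sqrt]
      positivity
    have hb0 : 0 < b := by
      rw [hb]
      apply Real.sqrt_pos.2
      positivity
    have hbk0 : 0 < b^k := pow_pos hb0 k
    have hbts : b^2 * (τ * (1-τ)) = 1 := by
      rw [hb2, hτdef]
      have hane : a ≠ 0 := ne_of_gt ha0
      have hne2 : a^2 - 1 ≠ 0 := ne_of_gt ha2m1
      field_simp
    have hbσ : b * (1-τ) ≤ 1 := by
      have h1 : b^2*(1-τ)^2*τ = (1-τ) * (b^2*(τ*(1-τ))) := by ring
      rw [hbts, mul_one] at h1
      have h2 : b^2*(1-τ)^2 ≤ 1 := by nlinarith [h1, hστ, hτ0]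
      nlinarith [h2, sq_nonneg (b*(1-τ)-1), mul_nonneg hb0.le hσ0.le]
    have ha2τσ : a^2*(τ*(1-τ)) = 1-τ := by
      linear_combination (1 - τ) * ha2τ
    -- the shrunk formula
    set sh : Clause → Clause :=
      fun C => if k < 2 * (C.filter (fun l => l.2 = false)).card
        then C.filter (fun l => l.2 = false) else C with hshdef
    set G : CNF := F.image sh with hGdef
    set V : Finset Var := varsOf F with hVdef
    have hshsub : ∀ C, sh C ⊆ C := by
      intro C
      rw [hshdef]
      dsimp only
      split
      · exact Finset.filter_subset _ _
      · exact subset_rfl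
    have hGmem : ∀ D ∈ G, ∃ C ∈ F, sh C = D := by
      intro D hD
      exact Finset.mem_image.1 hD
    have hGvalid : ∀ D ∈ G, ClauseValid D := by
      intro D hD
      obtain ⟨C, hC, rfl⟩ := hGmem D hD
      exact S14.valid_subset (hshsub C) (hF C hC).2
    have hGvars : ∀ D ∈ G, ∀ l ∈ D, l.1 ∈ V := by
      intro D hD l hl
      obtain ⟨C, hC, rfl⟩ := hGmem D hD
      rw [hVdef, varsOf]
      apply Finset.mem_biUnion.2
      exact ⟨C, hC, Finset.mem_image.2 ⟨l, hshsub C hl, rfl⟩⟩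
    have hGcard : ∀ D ∈ G, D.card ≤ k := by
      intro D hD
      obtain ⟨C, hC, rfl⟩ := hGmem D hD
      calc (sh C).card ≤ C.card := Finset.card_le_card (hshsub C)
        _ = k := (hF C hC).1
    have hGstruct : ∀ D ∈ G,
        ((∀ l ∈ D, l.2 = false) ∧ k + 1 ≤ 2 * D.card) ∨
        (D.card = k ∧ 2 * (D.filter (fun l => l.2 = false)).card ≤ k) := by
      intro D hD
      obtain ⟨C, hC, rfl⟩ := hGmem D hD
      rw [hshdef]
      dsimp only
      split
      case isTrue h =>
        left
        constructor
        · intro l hl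
          exact (Finset.mem_filter.1 hl).2
        · omega
      case isFalse h =>
        right
        constructor
        · exact (hF C hC).1
        · have heq : (C.filter (fun l => l.2 = false)).filter (fun l => l.2 = false)
              = C.filter (fun l => l.2 = false) := by
            rw [Finset.filter_filter]
            apply Finset.filter_congr
            intro l _
            simp
          omega
    -- occurrence comparison
    have hoccG : ∀ u : Lit, (G.filter (fun D => u ∈ D)).card ≤ occ F u := by
      intro u
      rw [occ]
      have hsub : G.filter (fun D => u ∈ D) ⊆ (F.filter (fun C => u ∈ sh C)).image sh := by
        intro D hD
        obtain ⟨hDG, hu⟩ := Finset.mem_filter.1 hD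
        obtain ⟨C, hC, rfl⟩ := hGmem D hDG
        exact Finset.mem_image.2 ⟨C, Finset.mem_filter.2 ⟨hC, hu⟩, rfl⟩
      calc (G.filter (fun D => u ∈ D)).card
          ≤ ((F.filter (fun C => u ∈ sh C)).image sh).card := Finset.card_le_card hsub
        _ ≤ (F.filter (fun C => u ∈ sh C)).card := Finset.card_image_le
        _ ≤ (F.filter (fun C => u ∈ C)).card := by
            apply Finset.card_le_card
            apply Finset.monotone_filter_right
            intro C hC hu
            exact hshsub C hu
    -- clause weight bounds
    have hwhat0 : ∀ D : Clause, 0 ≤ S14.what τ D := fun D => S14.what_nonneg hτ0 hτ1 D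
    have hKB1 : ∀ D ∈ G, a^k * S14.what τ D ≤ 1 := by
      intro D hD
      rw [S14.what_eq]
      rcases hGstruct D hD with ⟨hneg, hcard⟩ | ⟨hcard, hbal⟩
      · have hfe : D.filter (fun l => l.2 = false) = D := Finset.filter_true_of_mem hneg
        have hfne : D.filter (fun l => ¬ l.2 = false) = ∅ := by
          apply Finset.filter_false_of_mem
          intro l hl
          simp [hneg l hl]
        rw [hfe, hfne]
        simp only [Finset.card_empty, pow_zero, mul_one]
        apply S14.alg_shrunk ha1.le hτ0.le ha2τ
        omega
      · have hsum : (D.filter (fun l => l.2 = false)).card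
            + (D.filter (fun l => ¬ l.2 = false)).card = k := by
          rw [Finset.card_filter_add_card_filter_not, hcard]
        apply S14.alg_kept _ _ (mul_nonneg ha0.le hσ0.le) haσ hsum hbal
        · rw [ha2τσ]; linarith
        · rw [ha2τσ]; linarith
    have hKB2 : ∀ D ∈ G, (∃ l ∈ D, l.2 = true) → b^k * S14.what τ D ≤ 1 := by
      intro D hD hpos
      rcases hGstruct D hD with ⟨hneg, _⟩ | ⟨hcard, hbal⟩
      · obtain ⟨l, hl, hl2⟩ := hpos
        rw [hneg l hl] at hl2
        exact absurd hl2 (by simp)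
      · rw [S14.what_eq]
        have hsum : (D.filter (fun l => l.2 = false)).card
            + (D.filter (fun l => ¬ l.2 = false)).card = k := by
          rw [Finset.card_filter_add_card_filter_not, hcard]
        apply S14.alg_kept _ (le_of_eq hbts) (mul_nonneg hb0.le hσ0.le) hbσ hsum hbal
        rw [hbts]
        norm_num
    have hxle : ∀ D ∈ G, 2 * S14.what τ D ≤ 1/2 := by
      intro D hD
      have h1 := hKB1 D hD
      have h8 : (8:ℝ) ≤ a^k := le_trans (by linarith) hcase
      nlinarith [mul_le_mul_of_nonneg_right h8 (hwhat0 D), h1]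
    -- the conflict-sum bound
    have hfrac : ∀ C ∈ G, ∑ D ∈ G.filter (fun D => Conflict C D), (2 * S14.what τ D) ≤ 1/2 := by
      intro C hC
      have hsubB : G.filter (fun D => Conflict C D)
          ⊆ C.biUnion (fun l => G.filter (fun D => (l.1, !l.2) ∈ D)) := by
        intro D hD
        obtain ⟨hDG, x, hconf⟩ := Finset.mem_filter.1 hD
        apply Finset.mem_biUnion.2
        rcases hconf with ⟨h1, h2⟩ | ⟨h1, h2⟩
        · exact ⟨(x, true), h1, Finset.mem_filter.2 ⟨hDG, by simpa using h2⟩⟩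
        · exact ⟨(x, false), h1, Finset.mem_filter.2 ⟨hDG, by simpa using h2⟩⟩
      have hstep1 : ∑ D ∈ G.filter (fun D => Conflict C D), (2 * S14.what τ D)
          ≤ ∑ D ∈ C.biUnion (fun l => G.filter (fun D => (l.1, !l.2) ∈ D)), (2 * S14.what τ D) := by
        apply Finset.sum_le_sum_of_subset_of_nonneg hsubB
        intro D _ _
        have := hwhat0 D
        linarith
      have hstep2 : ∑ D ∈ C.biUnion (fun l => G.filter (fun D => (l.1, !l.2) ∈ D)), (2 * S14.what τ D)
          ≤ ∑ l ∈ C, ∑ D ∈ G.filter (fun D => (l.1, !l.2) ∈ D), (2 * S14.what τ D) := by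
        apply S14.sum_biUnion_le'
        intro D
        have := hwhat0 D
        linarith
      have hinner : ∀ l ∈ C, ∑ D ∈ G.filter (fun D => (l.1, !l.2) ∈ D), (2 * S14.what τ D)
          ≤ 1/(4*(k:ℝ)) := by
        intro l hl
        by_cases hl2 : l.2 = true
        · have hbound : ∀ D ∈ G.filter (fun D => (l.1, !l.2) ∈ D),
              2 * S14.what τ D ≤ 2 * (a^k)⁻¹ := by
            intro D hD
            have hDG := (Finset.mem_filter.1 hD).1
            have h1 := hKB1 D hDG
            have h2 : S14.what τ D ≤ (a^k)⁻¹ := by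
              rw [← one_div, le_div_iff₀ hak0]
              linarith [h1]
            linarith
          have hcard : ((G.filter (fun D => (l.1, !l.2) ∈ D)).card : ℝ) ≤ a^k/(8*k) := by
            have hc1 : ((G.filter (fun D => (l.1, !l.2) ∈ D)).card : ℝ)
                ≤ (occ F (l.1, !l.2) : ℝ) := by
              exact_mod_cast hoccG (l.1, !l.2)
            have hc2 : (occ F (l.1, !l.2) : ℝ) ≤ a^k/(8*k) := by
              have he : (l.1, !l.2) = (l.1, false) := by rw [hl2]; rfl
              rw [he]
              exact (hocc l.1).2
            exact le_trans hc1 hc2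
          calc ∑ D ∈ G.filter (fun D => (l.1, !l.2) ∈ D), (2 * S14.what τ D)
              ≤ (G.filter (fun D => (l.1, !l.2) ∈ D)).card • (2 * (a^k)⁻¹) :=
                Finset.sum_le_card_nsmul _ _ _ hbound
            _ = ((G.filter (fun D => (l.1, !l.2) ∈ D)).card : ℝ) * (2 * (a^k)⁻¹) := by
                rw [nsmul_eq_mul]
            _ ≤ (a^k/(8*k)) * (2 * (a^k)⁻¹) := by
                apply mul_le_mul_of_nonneg_right hcard
                positivity
            _ = 1/(4*(k:ℝ)) := by
                field_simp
                ring
        · have hbound : ∀ D ∈ G.filter (fun D => (l.1, !l.2) ∈ D),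
              2 * S14.what τ D ≤ 2 * (b^k)⁻¹ := by
            intro D hD
            obtain ⟨hDG, hmem⟩ := Finset.mem_filter.1 hD
            have hpos : ∃ m ∈ D, m.2 = true := by
              refine ⟨(l.1, !l.2), hmem, ?_⟩
              simp at hl2
              simp [hl2]
            have h1 := hKB2 D hDG hpos
            have h2 : S14.what τ D ≤ (b^k)⁻¹ := by
              rw [← one_div, le_div_iff₀ hbk0]
              linarith [h1]
            linarith
          have hcard : ((G.filter (fun D => (l.1, !l.2) ∈ D)).card : ℝ) ≤ b^k/(8*k) := by
            have hc1 : ((G.filter (fun D => (l.1, !l.2) ∈ D)).card : ℝ)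
                ≤ (occ F (l.1, !l.2) : ℝ) := by
              exact_mod_cast hoccG (l.1, !l.2)
            have hc2 : (occ F (l.1, !l.2) : ℝ) ≤ b^k/(8*k) := by
              have hl2' : l.2 = false := by simpa using hl2
              have he : (l.1, !l.2) = (l.1, true) := by rw [hl2']; rfl
              rw [he]
              exact (hocc l.1).1
            exact le_trans hc1 hc2
          calc ∑ D ∈ G.filter (fun D => (l.1, !l.2) ∈ D), (2 * S14.what τ D)
              ≤ (G.filter (fun D => (l.1, !l.2) ∈ D)).card • (2 * (b^k)⁻¹) :=
                Finset.sum_le_card_nsmul _ _ _ hbound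
            _ = ((G.filter (fun D => (l.1, !l.2) ∈ D)).card : ℝ) * (2 * (b^k)⁻¹) := by
                rw [nsmul_eq_mul]
            _ ≤ (b^k/(8*k)) * (2 * (b^k)⁻¹) := by
                apply mul_le_mul_of_nonneg_right hcard
                positivity
            _ = 1/(4*(k:ℝ)) := by
                field_simp
                ring
      have hcardC : ((C.card : ℝ)) ≤ (k:ℝ) := by exact_mod_cast hGcard C hC
      calc ∑ D ∈ G.filter (fun D => Conflict C D), (2 * S14.what τ D)
          ≤ ∑ l ∈ C, ∑ D ∈ G.filter (fun D => (l.1, !l.2) ∈ D), (2 * S14.what τ D) :=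
            le_trans hstep1 hstep2
        _ ≤ ∑ _l ∈ C, 1/(4*(k:ℝ)) := Finset.sum_le_sum hinner
        _ = (C.card : ℝ) * (1/(4*(k:ℝ))) := by rw [Finset.sum_const, nsmul_eq_mul]
        _ ≤ (k:ℝ) * (1/(4*(k:ℝ))) := by
            apply mul_le_mul_of_nonneg_right hcardC
            positivity
        _ = 1/4 := by
            field_simp
        _ ≤ 1/2 := by norm_num
    -- apply the local lemma
    obtain ⟨β, hβ⟩ := S14.lll hτ0 hτ1 hGvalid hGvars hxle hfrac
    refine ⟨fun y => if h : y ∈ V then β ⟨y, h⟩ else true, ?_⟩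
    intro C hC
    have hDG : sh C ∈ G := Finset.mem_image_of_mem sh hC
    obtain ⟨l, hl, hlV, hβl⟩ := hβ (sh C) hDG
    refine ⟨l, hshsub C hl, ?_⟩
    dsimp only
    rw [dif_pos hlV]
    exact hβl
  · -- trivial case : no negative literals at all
    push_neg at hcase
    have hnoneg : ∀ x : Var, ∀ C ∈ F, (x, false) ∉ C := by
      intro x C hC hmem
      have h2 := (hocc x).2
      have hlt : (occ F (x, false) : ℝ) < 1 := by
        apply lt_of_le_of_lt h2
        rw [div_lt_one hk0]
        exact hcase
      have h0 : occ F (x, false) = 0 := by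
        by_contra hne
        have h1 : 1 ≤ occ F (x, false) := Nat.one_le_iff_ne_zero.2 hne
        have h1' : (1:ℝ) ≤ (occ F (x,false) : ℝ) := by exact_mod_cast h1
        linarith
      have hmemf : C ∈ F.filter (fun C => (x,false) ∈ C) := Finset.mem_filter.2 ⟨hC, hmem⟩
      have hposcard : 0 < occ F (x, false) := by
        rw [occ]
        exact Finset.card_pos.2 ⟨C, hmemf⟩
      omega
    refine ⟨fun _ => true, ?_⟩
    intro C hC
    have hcard := (hF C hC).1
    have hne : C.Nonempty := by
      rw [← Finset.card_pos, hcard]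
      omega
    obtain ⟨l, hl⟩ := hne
    refine ⟨l, hl, ?_⟩
    cases hl2 : l.2 with
    | false =>
        exfalso
        apply hnoneg l.1 C hC
        have he : (l.1, false) = l := by
          rw [← hl2]
        rw [he]
        exact hl
    | true => rfl
end
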